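/- arXiv:0806.4812 — 3 statements merged into one kernel-verified Lean document; each statement's English description precedes it below -/
import Mathlib

section
/- For every n ≥ 3, the number of permutations π of {1,…,n} which have exactly one index i with 2 ≤ i ≤ n such that neither π(i)−1 nor π(i)+1 occurs among π(1),…,π(i−1), equals 2^{n−2}·(2^{n−1} − n). -/
open scoped Classical

noncomputable def numKinks {n : ℕ} (π : Equiv.Perm (Fin n)) : ℕ :=
  (Finset.univ.filter (fun i : Fin n =>
    0 < (i : ℕ) ∧ ∀ j : Fin n, (j : ℕ) < (i : ℕ) →
      (π j : ℕ) + 1 ≠ (π i : ℕ) ∧ (π i : ℕ) + 1 ≠ (π j : ℕ))).card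

noncomputable def F (n d : ℕ) : ℕ :=
  (Finset.univ.filter (fun π : Equiv.Perm (Fin n) => numKinks π = d)).card

namespace KinkProof

/-- `v` has no value-neighbour in the list `l`. -/
def nbrFreeL (v : ℕ) (l : List ℕ) : Prop := ∀ u ∈ l, u + 1 ≠ v ∧ v + 1 ≠ u

instance (v : ℕ) (l : List ℕ) : Decidable (nbrFreeL v l) := List.decidableBAll _ l

def kAr : List ℕ → ℕ
  | [] => 0
  | v :: l => kAr l + (if nbrFreeL v l then 1 else 0)

/-- number of positions (1-based, *including* the first) whose entry has no
value-neighbour among earlier entries. -/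
def kA (l : List ℕ) : ℕ := kAr l.reverse

lemma nbrFreeL_reverse (v : ℕ) (l : List ℕ) : nbrFreeL v l.reverse ↔ nbrFreeL v l := by
  simp [nbrFreeL]

lemma kA_nil : kA [] = 0 := rfl

lemma kA_concat (l : List ℕ) (v : ℕ) :
    kA (l ++ [v]) = kA l + (if nbrFreeL v l then 1 else 0) := by
  have h : (l ++ [v]).reverse = v :: l.reverse := by simp
  unfold kA
  rw [h]
  show kAr l.reverse + _ = _
  rw [if_congr (nbrFreeL_reverse v l) rfl rfl]

lemma one_le_kA (l : List ℕ) (h : l ≠ []) : 1 ≤ kA l := by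
  induction l using List.reverseRecOn with
  | nil => exact absurd rfl h
  | append_singleton l v ih =>
      rw [kA_concat]
      rcases eq_or_ne l [] with rfl | h'
      · simp [kA_nil, nbrFreeL]
      · exact le_trans (ih h') (Nat.le_add_right _ _)

/-- all orderings of a finset of naturals -/
noncomputable def ord (S : Finset ℕ) : Finset (List ℕ) :=
  ((S.sort (·≤·)).permutations).toFinset

lemma mem_ord {S : Finset ℕ} {l : List ℕ} : l ∈ ord S ↔ l.Nodup ∧ l.toFinset = S := by
  unfold ord
  rw [List.mem_toFinset, List.mem_permutations]
  constructor
  · intro h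
    have hnd : (S.sort (·≤·)).Nodup := S.sort_nodup _
    exact ⟨h.nodup_iff.mpr hnd,
      by rw [List.toFinset_eq_of_perm _ _ h, Finset.sort_toFinset]⟩
  · rintro ⟨h1, h2⟩
    have hnd : (S.sort (·≤·)).Nodup := S.sort_nodup _
    exact List.perm_of_nodup_nodup_toFinset_eq h1 hnd
      (by rw [h2, Finset.sort_toFinset])

def nbrFreeS (v : ℕ) (S : Finset ℕ) : Prop := ∀ u ∈ S, u + 1 ≠ v ∧ v + 1 ≠ u

noncomputable def eps (v : ℕ) (S : Finset ℕ) : ℕ := if nbrFreeS v S then 1 else 0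

lemma eps_le_one (v : ℕ) (S : Finset ℕ) : eps v S ≤ 1 := by
  unfold eps; split <;> simp

lemma nbrFreeL_iff {v : ℕ} {l : List ℕ} {T : Finset ℕ} (h : l.toFinset = T) :
    nbrFreeL v l ↔ nbrFreeS v T := by
  subst h
  simp [nbrFreeL, nbrFreeS]

lemma nbrFreeS_erase (v : ℕ) (S : Finset ℕ) : nbrFreeS v (S.erase v) ↔ nbrFreeS v S := by
  unfold nbrFreeS
  constructor
  · intro h u hu
    rcases eq_or_ne u v with rfl | hne
    · omega
    · exact h u (Finset.mem_erase.mpr ⟨hne, hu⟩)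
  · intro h u hu
    exact h u (Finset.mem_erase.mp hu).2

noncomputable def Kaux (S : Finset ℕ) (m : ℕ) : ℕ :=
  ((ord S).filter (fun l => kA l = m)).card

lemma ord_empty : ord ∅ = {[]} := by
  ext l
  rw [mem_ord]
  simp only [Finset.mem_singleton, List.toFinset_eq_empty_iff]
  constructor
  · exact fun h => h.2
  · rintro rfl
    exact ⟨List.nodup_nil, rfl⟩

lemma Kaux_empty (m : ℕ) : Kaux ∅ m = if m = 0 then 1 else 0 := by
  rw [Kaux, ord_empty]
  rcases eq_or_ne m 0 with rfl | hm
  · rw [Finset.filter_singleton]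
    simp [kA_nil]
  · rw [Finset.filter_singleton]
    simp [kA_nil, Ne.symm hm, hm]

lemma Kaux_rec (S : Finset ℕ) (m : ℕ) (hm : 1 ≤ m) :
    Kaux S m = ∑ v ∈ S, Kaux (S.erase v) (m - eps v S) := by
  have hset : (ord S).filter (fun l => kA l = m) =
      S.biUnion (fun v => ((ord (S.erase v)).filter
        (fun l => kA l = m - eps v S)).image (fun l => l ++ [v])) := by
    ext l
    constructor
    · intro hl
      rw [Finset.mem_filter, mem_ord] at hl
      obtain ⟨⟨hnd, hS⟩, hk⟩ := hl
      have hne : l ≠ [] := by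
        intro h
        rw [h, kA_nil] at hk
        omega
      set v := l.getLast hne with hv
      have hmemv : v ∈ S := by
        rw [← hS]
        exact List.mem_toFinset.mpr (List.getLast_mem hne)
      have hd : l.dropLast ++ [v] = l := List.dropLast_append_getLast hne
      set t := l.dropLast with htdef
      have hndt : t.Nodup ∧ v ∉ t := by
        have := hnd
        rw [← hd] at this
        rw [List.nodup_append] at this
        exact ⟨this.1, fun hvt => this.2.2 v hvt v (List.mem_singleton_self v) rfl⟩
      have hins : S = insert v t.toFinset := by
        rw [← hS, ← hd]
        ext x
        simp [List.mem_toFinset, or_comm]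
      have hTset : t.toFinset = S.erase v := by
        rw [hins, Finset.erase_insert]
        rw [List.mem_toFinset]
        exact hndt.2
      have hnf : nbrFreeL v t ↔ nbrFreeS v S := by
        rw [nbrFreeL_iff hTset, nbrFreeS_erase]
      have hkt : kA t = m - eps v S := by
        have hthis := kA_concat t v
        rw [hd, hk] at hthis
        rcases Classical.em (nbrFreeS v S) with hc | hc
        · rw [if_pos (hnf.mpr hc)] at hthis
          have he : eps v S = 1 := by unfold eps; exact if_pos hc
          omega
        · rw [if_neg (fun hx => hc (hnf.mp hx))] at hthis
          have he : eps v S = 0 := by unfold eps; exact if_neg hc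
          omega
      rw [Finset.mem_biUnion]
      refine ⟨v, hmemv, ?_⟩
      rw [Finset.mem_image]
      exact ⟨t, Finset.mem_filter.mpr ⟨mem_ord.mpr ⟨hndt.1, hTset⟩, hkt⟩, hd⟩
    · intro hl
      rw [Finset.mem_biUnion] at hl
      obtain ⟨v, hv, hl⟩ := hl
      rw [Finset.mem_image] at hl
      obtain ⟨t, ht, rfl⟩ := hl
      rw [Finset.mem_filter, mem_ord] at ht
      obtain ⟨⟨hnd, hT⟩, hk⟩ := ht
      have hvt : v ∉ t := by
        intro h
        have := List.mem_toFinset.mpr h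
        rw [hT] at this
        exact (Finset.mem_erase.mp this).1 rfl
      have hnodup : (t ++ [v]).Nodup := by
        rw [List.nodup_append]
        refine ⟨hnd, List.nodup_singleton v, ?_⟩
        intro a ha b hb
        rw [List.mem_singleton] at hb
        subst hb
        intro hab; subst hab
        exact hvt ha
      rw [Finset.mem_filter, mem_ord]
      refine ⟨⟨hnodup, ?_⟩, ?_⟩
      · rw [List.toFinset_append, hT]
        ext x
        simp only [Finset.mem_union, Finset.mem_erase, List.toFinset_cons,
          List.toFinset_nil, Finset.mem_insert, Finset.notMem_empty, or_false]
        constructor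
        · rintro (⟨_, hx⟩ | rfl)
          · exact hx
          · exact hv
        · intro hx
          rcases eq_or_ne x v with rfl | hne
          · right; rfl
          · left; exact ⟨hne, hx⟩
      · rw [kA_concat, hk]
        have hnf : nbrFreeL v t ↔ nbrFreeS v S := by
          rw [nbrFreeL_iff hT, nbrFreeS_erase]
        rcases Classical.em (nbrFreeS v S) with hc | hc
        · rw [if_pos (hnf.mpr hc)]
          have he : eps v S = 1 := by unfold eps; exact if_pos hc
          omega
        · rw [if_neg (fun hx => hc (hnf.mp hx))]
          have he : eps v S = 0 := by unfold eps; exact if_neg hc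
          omega
  rw [Kaux, hset, Finset.card_biUnion]
  · refine Finset.sum_congr rfl (fun v hv => ?_)
    rw [Finset.card_image_of_injective]
    · rfl
    · intro a b hab
      have h2 : a ++ [v] = b ++ [v] := hab
      have h3 := congrArg List.dropLast h2
      rwa [List.dropLast_concat, List.dropLast_concat] at h3
  · intro v hv w hw hvw
    rw [Function.onFun, Finset.disjoint_left]
    intro l h1 h2
    rw [Finset.mem_image] at h1 h2
    obtain ⟨t1, _, e1⟩ := h1
    obtain ⟨t2, _, e2⟩ := h2
    apply hvw
    have h3 := congrArg List.getLast? (e1.trans e2.symm)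
    rw [List.getLast?_concat, List.getLast?_concat] at h3
    exact Option.some_injective _ h3

noncomputable def nBlocks (S : Finset ℕ) : ℕ := (S.filter (fun x => x + 1 ∉ S)).card

lemma nBlocks_erase_ge (S : Finset ℕ) (v : ℕ) :
    nBlocks S ≤ nBlocks (S.erase v) + 1 := by
  have hsub : (S.filter (fun x => x + 1 ∉ S)).erase v ⊆
      (S.erase v).filter (fun x => x + 1 ∉ S.erase v) := by
    intro x hx
    rw [Finset.mem_erase, Finset.mem_filter] at hx
    rw [Finset.mem_filter, Finset.mem_erase]
    exact ⟨⟨hx.1, hx.2.1⟩, fun h => hx.2.2 (Finset.mem_of_mem_erase h)⟩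
  calc nBlocks S ≤ ((S.filter (fun x => x + 1 ∉ S)).erase v).card + 1 := by
        unfold nBlocks
        rcases Classical.em (v ∈ S.filter (fun x => x + 1 ∉ S)) with h | h
        · have := Finset.card_erase_add_one h
          omega
        · rw [Finset.erase_eq_of_notMem h]
          omega
    _ ≤ nBlocks (S.erase v) + 1 := by
        unfold nBlocks
        exact Nat.add_le_add_right (Finset.card_le_card hsub) 1

lemma nBlocks_erase_ge_of_nbr (S : Finset ℕ) (v : ℕ) (h : ¬ nbrFreeS v S) :
    nBlocks S ≤ nBlocks (S.erase v) := by
  unfold nbrFreeS at h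
  push_neg at h
  obtain ⟨u, hu, hcase⟩ := h
  rcases Classical.em (v + 1 ∈ S) with hv1 | hv1
  · -- v has its successor in S; every right end of S is a right end of S.erase v
    apply Finset.card_le_card
    intro x hx
    rw [Finset.mem_filter] at hx
    have hxv : x ≠ v := by
      intro h
      exact hx.2 (h ▸ hv1)
    rw [Finset.mem_filter, Finset.mem_erase]
    exact ⟨⟨hxv, hx.1⟩, fun hc => hx.2 (Finset.mem_of_mem_erase hc)⟩
  · -- then u + 1 = v with u ∈ S
    have huv : u + 1 = v := by
      by_cases hu1 : u + 1 = v
      · exact hu1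
      · exfalso
        apply hv1
        rw [hcase hu1]
        exact hu
    apply Finset.card_le_card_of_injOn (fun x => if x = v then u else x)
    · intro x hx
      rw [Finset.mem_coe] at hx ⊢
      rw [Finset.mem_filter] at hx
      by_cases hxv : x = v
      · simp only [if_pos hxv]
        rw [Finset.mem_filter, Finset.mem_erase]
        refine ⟨⟨by omega, hu⟩, ?_⟩
        rw [huv]
        intro hc
        exact (Finset.mem_erase.mp hc).1 rfl
      · simp only [if_neg hxv]
        rw [Finset.mem_filter, Finset.mem_erase]
        exact ⟨⟨hxv, hx.1⟩, fun hc => hx.2 (Finset.mem_of_mem_erase hc)⟩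
    · intro x hx y hy hxy
      rw [Finset.mem_coe, Finset.mem_filter] at hx hy
      by_cases hxv : x = v <;> by_cases hyv : y = v
      · rw [hxv, hyv]
      · exfalso
        simp only [if_pos hxv, if_neg hyv] at hxy
        apply hy.2
        rw [← hxy, huv, ← hxv]
        exact hx.1
      · exfalso
        simp only [if_neg hxv, if_pos hyv] at hxy
        apply hx.2
        rw [hxy, huv, ← hyv]
        exact hy.1
      · simpa [if_neg hxv, if_neg hyv] using hxy

lemma Kaux_pos_empty_ne (S : Finset ℕ) (m : ℕ) (hS : S.Nonempty) : Kaux S 0 = 0 := by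
  rw [Kaux, Finset.card_eq_zero, Finset.filter_eq_empty_iff]
  intro l hl
  rw [mem_ord] at hl
  have hne : l ≠ [] := by
    rintro rfl
    have h2 : (∅ : Finset ℕ) = S := by simpa using hl.2
    exact hS.ne_empty h2.symm
  have := one_le_kA l hne
  omega

lemma Kaux_eq_zero_aux : ∀ (k : ℕ) (S : Finset ℕ) (m : ℕ), S.card ≤ k →
    m < nBlocks S → Kaux S m = 0 := by
  intro k
  induction k with
  | zero =>
      intro S m hcard h
      have : S = ∅ := Finset.card_eq_zero.mp (Nat.le_zero.mp hcard)
      subst this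
      simp [nBlocks] at h
  | succ k ih =>
      intro S m hcard h
      have hS : S.Nonempty := by
        by_contra hc
        rw [Finset.not_nonempty_iff_eq_empty] at hc
        subst hc
        simp [nBlocks] at h
      rcases Nat.eq_zero_or_pos m with rfl | hm
      · exact Kaux_pos_empty_ne S 0 hS
      · rw [Kaux_rec S m hm]
        apply Finset.sum_eq_zero
        intro v hv
        apply ih
        · rw [Finset.card_erase_of_mem hv]
          omega
        · rcases Classical.em (nbrFreeS v S) with hc | hc
          · have h1 := nBlocks_erase_ge S v
            have : eps v S = 1 := if_pos hc
            omega
          · have h1 := nBlocks_erase_ge_of_nbr S v hc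
            have : eps v S = 0 := if_neg hc
            omega

lemma Kaux_eq_zero (S : Finset ℕ) (m : ℕ) (h : m < nBlocks S) : Kaux S m = 0 :=
  Kaux_eq_zero_aux S.card S m le_rfl h

lemma eps_eq_zero_of_succ_mem {v : ℕ} {S : Finset ℕ} (h : v + 1 ∈ S) : eps v S = 0 := by
  unfold eps
  rw [if_neg]
  intro hc
  exact (hc (v + 1) h).2 rfl

lemma eps_eq_zero_of_pred_mem {v : ℕ} {S : Finset ℕ} (h : v - 1 ∈ S) (hv : 1 ≤ v) :
    eps v S = 0 := by
  unfold eps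
  rw [if_neg]
  intro hc
  exact (hc (v - 1) h).1 (by omega)

lemma two_le_nBlocks (a b c d : ℕ) (h1 : a < b) (h2 : b < c) (h3 : c < d) :
    2 ≤ nBlocks (Finset.Ico a b ∪ Finset.Ico c d) := by
  have hsub : ({b - 1, d - 1} : Finset ℕ) ⊆
      (Finset.Ico a b ∪ Finset.Ico c d).filter
        (fun x => x + 1 ∉ Finset.Ico a b ∪ Finset.Ico c d) := by
    intro x hx
    simp only [Finset.mem_insert, Finset.mem_singleton] at hx
    simp only [Finset.mem_filter, Finset.mem_union, Finset.mem_Ico]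
    rcases hx with rfl | rfl <;> omega
  have hcard : ({b - 1, d - 1} : Finset ℕ).card = 2 := by
    rw [Finset.card_insert_of_notMem (by simp; omega), Finset.card_singleton]
  calc 2 = ({b - 1, d - 1} : Finset ℕ).card := hcard.symm
    _ ≤ _ := Finset.card_le_card hsub

lemma three_le_nBlocks (a b c d e f : ℕ) (h1 : a < b) (h2 : b < c) (h3 : c < d)
    (h4 : d < e) (h5 : e < f) :
    3 ≤ nBlocks (Finset.Ico a b ∪ Finset.Ico c d ∪ Finset.Ico e f) := by
  have hsub : ({b - 1, d - 1, f - 1} : Finset ℕ) ⊆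
      (Finset.Ico a b ∪ Finset.Ico c d ∪ Finset.Ico e f).filter
        (fun x => x + 1 ∉ Finset.Ico a b ∪ Finset.Ico c d ∪ Finset.Ico e f) := by
    intro x hx
    simp only [Finset.mem_insert, Finset.mem_singleton] at hx
    simp only [Finset.mem_filter, Finset.mem_union, Finset.mem_Ico]
    rcases hx with rfl | rfl | rfl <;> omega
  have hcard : ({b - 1, d - 1, f - 1} : Finset ℕ).card = 3 := by
    rw [Finset.card_insert_of_notMem (by simp; omega),
      Finset.card_insert_of_notMem (by simp; omega), Finset.card_singleton]
  calc 3 = ({b - 1, d - 1, f - 1} : Finset ℕ).card := hcard.symm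
    _ ≤ _ := Finset.card_le_card hsub

/-- zero-kink count for an interval -/
lemma Kaux_Ico_one (a p : ℕ) (hp : 1 ≤ p) :
    Kaux (Finset.Ico a (a + p)) 1 = 2 ^ (p - 1) := by
  induction p, hp using Nat.le_induction generalizing a with
  | base =>
      rw [Kaux_rec _ 1 le_rfl]
      have h1 : Finset.Ico a (a + 1) = {a} := by
        ext x
        simp only [Finset.mem_Ico, Finset.mem_singleton]
        omega
      rw [h1, Finset.sum_singleton]
      have he : eps a ({a} : Finset ℕ) = 1 := by
        unfold eps
        rw [if_pos]
        intro u hu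
        simp only [Finset.mem_singleton] at hu
        omega
      rw [Finset.erase_singleton, he, Kaux_empty]
      simp
  | succ p hp ih =>
      set S := Finset.Ico a (a + (p + 1)) with hSdef
      rw [Kaux_rec _ 1 le_rfl]
      have hg : ∀ v ∈ S, Kaux (S.erase v) (1 - eps v S)
          = (if v = a ∨ v = a + p then 2 ^ (p - 1) else 0) := by
        intro v hv
        rw [hSdef, Finset.mem_Ico] at hv
        have heps : eps v S = 0 := by
          rcases Classical.em (v + 1 < a + (p + 1)) with hlt | hlt
          · exact eps_eq_zero_of_succ_mem (by rw [hSdef, Finset.mem_Ico]; omega)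
          · exact eps_eq_zero_of_pred_mem (by rw [hSdef, Finset.mem_Ico]; omega) (by omega)
        rw [heps]
        rcases Classical.em (v = a) with rfl | hva
        · have he : S.erase v = Finset.Ico (v + 1) ((v + 1) + p) := by
            ext x
            simp only [Finset.mem_erase, hSdef, Finset.mem_Ico]
            omega
          rw [he, ih (v + 1)]
          simp
        · rcases Classical.em (v = a + p) with rfl | hvp
          · have he : S.erase (a + p) = Finset.Ico a (a + p) := by
              ext x
              simp only [Finset.mem_erase, hSdef, Finset.mem_Ico]
              omega
            rw [he, ih a]
            simp [hva]
          · have he : S.erase v = Finset.Ico a v ∪ Finset.Ico (v + 1) (a + (p + 1)) := by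
              ext x
              simp only [Finset.mem_erase, hSdef, Finset.mem_Ico, Finset.mem_union]
              omega
            rw [he, Kaux_eq_zero]
            · simp [hva, hvp]
            · have := two_le_nBlocks a v (v + 1) (a + (p + 1)) (by omega) (by omega) (by omega)
              omega
      rw [Finset.sum_congr rfl hg, ← Finset.sum_filter]
      have hfil : S.filter (fun v => v = a ∨ v = a + p) = {a, a + p} := by
        ext x
        simp only [Finset.mem_filter, hSdef, Finset.mem_Ico, Finset.mem_insert,
          Finset.mem_singleton]
        omega
      rw [hfil, Finset.sum_pair (by omega)]
      have e1 : p + 1 - 1 = (p - 1) + 1 := by omega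
      rw [e1, pow_succ]
      ring

lemma Kaux_two_Ico_aux : ∀ (N p q : ℕ), p + q ≤ N → 1 ≤ p → 1 ≤ q → ∀ (a b : ℕ), a + p < b →
    Kaux (Finset.Ico a (a + p) ∪ Finset.Ico b (b + q)) 2
      = (p + q).choose p * 2 ^ (p + q - 2) := by
  intro N
  induction N with
  | zero => intro p q h hp hq; omega
  | succ N ih =>
      intro p q hpq hp hq a b hab
      have hdisj : Disjoint (Finset.Ico a (a + p)) (Finset.Ico b (b + q)) := by
        rw [Finset.disjoint_left]
        intro x hx hx2
        rw [Finset.mem_Ico] at hx hx2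
        omega
      rw [Kaux_rec _ 2 (by omega), Finset.sum_union hdisj]
      have hleft : ∑ v ∈ Finset.Ico a (a + p),
          Kaux ((Finset.Ico a (a + p) ∪ Finset.Ico b (b + q)).erase v)
            (2 - eps v (Finset.Ico a (a + p) ∪ Finset.Ico b (b + q)))
          = (if p = 1 then 2 ^ (q - 1)
              else 2 * ((p - 1 + q).choose (p - 1) * 2 ^ (p - 1 + q - 2))) := by
        rcases eq_or_ne p 1 with rfl | hp1
        · rw [if_pos rfl]
          have h1 : Finset.Ico a (a + 1) = {a} := by
            ext x
            simp only [Finset.mem_Ico, Finset.mem_singleton]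
            omega
          rw [h1, Finset.sum_singleton]
          have he : eps a ({a} ∪ Finset.Ico b (b + q)) = 1 := by
            unfold eps
            rw [if_pos]
            intro u hu
            simp only [Finset.mem_union, Finset.mem_singleton, Finset.mem_Ico] at hu
            omega
          have her : ({a} ∪ Finset.Ico b (b + q)).erase a = Finset.Ico b (b + q) := by
            ext x
            simp only [Finset.mem_erase, Finset.mem_union, Finset.mem_singleton, Finset.mem_Ico]
            omega
          rw [her, he, Kaux_Ico_one b q hq]
        · rw [if_neg hp1]
          have hp2 : 2 ≤ p := by omega
          have hg : ∀ v ∈ Finset.Ico a (a + p),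
              Kaux ((Finset.Ico a (a + p) ∪ Finset.Ico b (b + q)).erase v)
                (2 - eps v (Finset.Ico a (a + p) ∪ Finset.Ico b (b + q)))
              = (if v = a ∨ v = a + p - 1
                  then (p - 1 + q).choose (p - 1) * 2 ^ (p - 1 + q - 2) else 0) := by
            intro v hv
            rw [Finset.mem_Ico] at hv
            have heps : eps v (Finset.Ico a (a + p) ∪ Finset.Ico b (b + q)) = 0 := by
              rcases Classical.em (v + 1 < a + p) with hlt | hlt
              · exact eps_eq_zero_of_succ_mem
                  (by simp only [Finset.mem_union, Finset.mem_Ico]; omega)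
              · exact eps_eq_zero_of_pred_mem
                  (by simp only [Finset.mem_union, Finset.mem_Ico]; omega) (by omega)
            rw [heps]
            rcases Classical.em (v = a) with hva | hva
            · have her : (Finset.Ico a (a + p) ∪ Finset.Ico b (b + q)).erase v
                  = Finset.Ico (a + 1) ((a + 1) + (p - 1)) ∪ Finset.Ico b (b + q) := by
                ext x
                simp only [Finset.mem_erase, Finset.mem_union, Finset.mem_Ico]
                omega
              rw [her, ih (p - 1) q (by omega) (by omega) hq (a + 1) b (by omega),
                if_pos (Or.inl hva)]
            · rcases Classical.em (v = a + p - 1) with hvp | hvp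
              · have her : (Finset.Ico a (a + p) ∪ Finset.Ico b (b + q)).erase v
                    = Finset.Ico a (a + (p - 1)) ∪ Finset.Ico b (b + q) := by
                  ext x
                  simp only [Finset.mem_erase, Finset.mem_union, Finset.mem_Ico]
                  omega
                rw [her, ih (p - 1) q (by omega) (by omega) hq a b (by omega),
                  if_pos (Or.inr hvp)]
              · have her : (Finset.Ico a (a + p) ∪ Finset.Ico b (b + q)).erase v
                    = Finset.Ico a v ∪ Finset.Ico (v + 1) (a + p) ∪ Finset.Ico b (b + q) := by
                  ext x
                  simp only [Finset.mem_erase, Finset.mem_union, Finset.mem_Ico]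
                  omega
                rw [her, Kaux_eq_zero, if_neg (by push_neg; exact ⟨hva, hvp⟩)]
                have := three_le_nBlocks a v (v + 1) (a + p) b (b + q)
                  (by omega) (by omega) (by omega) (by omega) (by omega)
                omega
          rw [Finset.sum_congr rfl hg, ← Finset.sum_filter]
          have hfil : (Finset.Ico a (a + p)).filter (fun v => v = a ∨ v = a + p - 1)
              = {a, a + p - 1} := by
            ext x
            simp only [Finset.mem_filter, Finset.mem_Ico, Finset.mem_insert,
              Finset.mem_singleton]
            omega
          rw [hfil, Finset.sum_pair (by omega)]
          ring
      have hright : ∑ v ∈ Finset.Ico b (b + q),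
          Kaux ((Finset.Ico a (a + p) ∪ Finset.Ico b (b + q)).erase v)
            (2 - eps v (Finset.Ico a (a + p) ∪ Finset.Ico b (b + q)))
          = (if q = 1 then 2 ^ (p - 1)
              else 2 * ((p + (q - 1)).choose p * 2 ^ (p + (q - 1) - 2))) := by
        rcases eq_or_ne q 1 with rfl | hq1
        · rw [if_pos rfl]
          have h1 : Finset.Ico b (b + 1) = {b} := by
            ext x
            simp only [Finset.mem_Ico, Finset.mem_singleton]
            omega
          rw [h1, Finset.sum_singleton]
          have he : eps b (Finset.Ico a (a + p) ∪ {b}) = 1 := by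
            unfold eps
            rw [if_pos]
            intro u hu
            simp only [Finset.mem_union, Finset.mem_singleton, Finset.mem_Ico] at hu
            omega
          have her : (Finset.Ico a (a + p) ∪ {b}).erase b = Finset.Ico a (a + p) := by
            ext x
            simp only [Finset.mem_erase, Finset.mem_union, Finset.mem_singleton, Finset.mem_Ico]
            omega
          rw [her, he, Kaux_Ico_one a p hp]
        · rw [if_neg hq1]
          have hq2 : 2 ≤ q := by omega
          have hg : ∀ v ∈ Finset.Ico b (b + q),
              Kaux ((Finset.Ico a (a + p) ∪ Finset.Ico b (b + q)).erase v)
                (2 - eps v (Finset.Ico a (a + p) ∪ Finset.Ico b (b + q)))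
              = (if v = b ∨ v = b + q - 1
                  then (p + (q - 1)).choose p * 2 ^ (p + (q - 1) - 2) else 0) := by
            intro v hv
            rw [Finset.mem_Ico] at hv
            have heps : eps v (Finset.Ico a (a + p) ∪ Finset.Ico b (b + q)) = 0 := by
              rcases Classical.em (v + 1 < b + q) with hlt | hlt
              · exact eps_eq_zero_of_succ_mem
                  (by simp only [Finset.mem_union, Finset.mem_Ico]; omega)
              · exact eps_eq_zero_of_pred_mem
                  (by simp only [Finset.mem_union, Finset.mem_Ico]; omega) (by omega)
            rw [heps]
            rcases Classical.em (v = b) with hvb | hvb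
            · have her : (Finset.Ico a (a + p) ∪ Finset.Ico b (b + q)).erase v
                  = Finset.Ico a (a + p) ∪ Finset.Ico (b + 1) ((b + 1) + (q - 1)) := by
                ext x
                simp only [Finset.mem_erase, Finset.mem_union, Finset.mem_Ico]
                omega
              rw [her, ih p (q - 1) (by omega) hp (by omega) a (b + 1) (by omega),
                if_pos (Or.inl hvb)]
            · rcases Classical.em (v = b + q - 1) with hvq | hvq
              · have her : (Finset.Ico a (a + p) ∪ Finset.Ico b (b + q)).erase v
                    = Finset.Ico a (a + p) ∪ Finset.Ico b (b + (q - 1)) := by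
                  ext x
                  simp only [Finset.mem_erase, Finset.mem_union, Finset.mem_Ico]
                  omega
                rw [her, ih p (q - 1) (by omega) hp (by omega) a b (by omega),
                  if_pos (Or.inr hvq)]
              · have her : (Finset.Ico a (a + p) ∪ Finset.Ico b (b + q)).erase v
                    = Finset.Ico a (a + p) ∪ Finset.Ico b v ∪ Finset.Ico (v + 1) (b + q) := by
                  ext x
                  simp only [Finset.mem_erase, Finset.mem_union, Finset.mem_Ico]
                  omega
                rw [her, Kaux_eq_zero, if_neg (by push_neg; exact ⟨hvb, hvq⟩)]
                have := three_le_nBlocks a (a + p) b v (v + 1) (b + q)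
                  (by omega) (by omega) (by omega) (by omega) (by omega)
                omega
          rw [Finset.sum_congr rfl hg, ← Finset.sum_filter]
          have hfil : (Finset.Ico b (b + q)).filter (fun v => v = b ∨ v = b + q - 1)
              = {b, b + q - 1} := by
            ext x
            simp only [Finset.mem_filter, Finset.mem_Ico, Finset.mem_insert,
              Finset.mem_singleton]
            omega
          rw [hfil, Finset.sum_pair (by omega)]
          ring
      rw [hleft, hright]
      rcases eq_or_ne p 1 with rfl | hp1 <;> rcases eq_or_ne q 1 with rfl | hq1
      · norm_num
      · rw [if_pos rfl, if_neg hq1]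
        obtain ⟨q2, rfl⟩ : ∃ q2, q = q2 + 2 := ⟨q - 2, by omega⟩
        have e3 : 1 + (q2 + 2 - 1) - 2 = q2 := by omega
        have e2 : 1 + (q2 + 2 - 1) = q2 + 2 := by omega
        have e1 : q2 + 2 - 1 = q2 + 1 := by omega
        have e4 : 1 + (q2 + 2) - 2 = q2 + 1 := by omega
        have e5 : 1 + (q2 + 2) = q2 + 3 := by omega
        rw [e3, e2, e1, e4, e5, Nat.choose_one_right, Nat.choose_one_right]
        ring
      · rw [if_neg hp1, if_pos rfl]
        obtain ⟨p2, rfl⟩ : ∃ p2, p = p2 + 2 := ⟨p - 2, by omega⟩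
        have e3 : p2 + 2 - 1 + 1 - 2 = p2 := by omega
        have e2 : p2 + 2 - 1 + 1 = p2 + 2 := by omega
        have e1 : p2 + 2 - 1 = p2 + 1 := by omega
        have e4 : p2 + 2 + 1 - 2 = p2 + 1 := by omega
        rw [e3, e2, e1, e4,
          show (p2 + 2).choose (p2 + 1) = p2 + 2 from Nat.choose_succ_self_right (p2 + 1),
          show (p2 + 2 + 1).choose (p2 + 2) = p2 + 3 from Nat.choose_succ_self_right (p2 + 2)]
        ring
      · rw [if_neg hp1, if_neg hq1]
        obtain ⟨p2, rfl⟩ : ∃ p2, p = p2 + 2 := ⟨p - 2, by omega⟩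
        obtain ⟨q2, rfl⟩ : ∃ q2, q = q2 + 2 := ⟨q - 2, by omega⟩
        have e3 : p2 + 2 - 1 + (q2 + 2) - 2 = p2 + q2 + 1 := by omega
        have e2 : p2 + 2 - 1 + (q2 + 2) = p2 + q2 + 3 := by omega
        have e1 : p2 + 2 - 1 = p2 + 1 := by omega
        have e5 : p2 + 2 + (q2 + 2 - 1) - 2 = p2 + q2 + 1 := by omega
        have e4 : p2 + 2 + (q2 + 2 - 1) = p2 + q2 + 3 := by omega
        have e7 : p2 + 2 + (q2 + 2) - 2 = p2 + q2 + 2 := by omega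
        have e6 : p2 + 2 + (q2 + 2) = p2 + q2 + 4 := by omega
        rw [e3, e2, e1, e5, e4, e7, e6]
        have hpascal : (p2 + q2 + 4).choose (p2 + 2)
            = (p2 + q2 + 3).choose (p2 + 1) + (p2 + q2 + 3).choose (p2 + 1 + 1) :=
          Nat.choose_succ_succ' (p2 + q2 + 3) (p2 + 1)
        rw [hpascal, show p2 + 1 + 1 = p2 + 2 from rfl]
        ring

/-- one-kink count for two separated intervals -/
lemma Kaux_two_Ico (p q : ℕ) (hp : 1 ≤ p) (hq : 1 ≤ q) (a b : ℕ) (hab : a + p < b) :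
    Kaux (Finset.Ico a (a + p) ∪ Finset.Ico b (b + q)) 2
      = (p + q).choose p * 2 ^ (p + q - 2) :=
  Kaux_two_Ico_aux (p + q) p q le_rfl hp hq a b hab

/-- one-kink count for an interval -/
lemma Kaux_Ico_two (a n : ℕ) (hn : 1 ≤ n) :
    Kaux (Finset.Ico a (a + n)) 2 = 2 ^ (n - 2) * (2 ^ (n - 1) - n) := by
  induction n, hn using Nat.le_induction generalizing a with
  | base =>
      rw [Kaux_rec _ 2 (by omega)]
      have h1 : Finset.Ico a (a + 1) = {a} := by
        ext x
        simp only [Finset.mem_Ico, Finset.mem_singleton]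
        omega
      rw [h1, Finset.sum_singleton, Finset.erase_singleton]
      have he : eps a ({a} : Finset ℕ) = 1 := by
        unfold eps
        rw [if_pos]
        intro u hu
        simp only [Finset.mem_singleton] at hu
        omega
      rw [he, Kaux_empty]
      norm_num
  | succ n hn ih =>
      obtain ⟨m, rfl⟩ : ∃ m, n = m + 1 := ⟨n - 1, by omega⟩
      rw [Kaux_rec _ 2 (by omega)]
      have hg : ∀ v ∈ Finset.Ico a (a + (m + 1 + 1)),
          Kaux ((Finset.Ico a (a + (m + 1 + 1))).erase v)
            (2 - eps v (Finset.Ico a (a + (m + 1 + 1))))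
          = (if v = a ∨ v = a + (m + 1)
              then 2 ^ (m + 1 - 2) * (2 ^ (m + 1 - 1) - (m + 1))
              else (m + 1).choose (v - a) * 2 ^ (m + 1 - 2)) := by
        intro v hv
        rw [Finset.mem_Ico] at hv
        have heps : eps v (Finset.Ico a (a + (m + 1 + 1))) = 0 := by
          rcases Classical.em (v + 1 < a + (m + 1 + 1)) with hlt | hlt
          · exact eps_eq_zero_of_succ_mem (by rw [Finset.mem_Ico]; omega)
          · exact eps_eq_zero_of_pred_mem (by rw [Finset.mem_Ico]; omega) (by omega)
        rw [heps]
        rcases Classical.em (v = a) with hva | hva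
        · have her : (Finset.Ico a (a + (m + 1 + 1))).erase v
              = Finset.Ico (a + 1) ((a + 1) + (m + 1)) := by
            ext x
            simp only [Finset.mem_erase, Finset.mem_Ico]
            omega
          rw [her, ih (a + 1), if_pos (Or.inl hva)]
        · rcases Classical.em (v = a + (m + 1)) with hvm | hvm
          · have her : (Finset.Ico a (a + (m + 1 + 1))).erase v
                = Finset.Ico a (a + (m + 1)) := by
              ext x
              simp only [Finset.mem_erase, Finset.mem_Ico]
              omega
            rw [her, ih a, if_pos (Or.inr hvm)]
          · have her : (Finset.Ico a (a + (m + 1 + 1))).erase v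
                = Finset.Ico a (a + (v - a)) ∪ Finset.Ico (v + 1) ((v + 1) + (a + (m + 1) - v)) := by
              ext x
              simp only [Finset.mem_erase, Finset.mem_Ico, Finset.mem_union]
              omega
            rw [her, Kaux_two_Ico (v - a) (a + (m + 1) - v) (by omega) (by omega) a (v + 1)
              (by omega), if_neg (by push_neg; exact ⟨hva, hvm⟩)]
            have ee : v - a + (a + (m + 1) - v) = m + 1 := by omega
            rw [ee]
      rw [Finset.sum_congr rfl hg]
      have hsplit : Finset.Ico a (a + (m + 1 + 1))
          = insert a (insert (a + (m + 1)) (Finset.Ico (a + 1) (a + (m + 1)))) := by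
        ext x
        simp only [Finset.mem_Ico, Finset.mem_insert]
        omega
      rw [hsplit, Finset.sum_insert (by simp only [Finset.mem_insert, Finset.mem_Ico]; omega),
        Finset.sum_insert (by simp only [Finset.mem_Ico]; omega),
        if_pos (Or.inl rfl), if_pos (Or.inr rfl)]
      have hmid : ∑ v ∈ Finset.Ico (a + 1) (a + (m + 1)),
          (if v = a ∨ v = a + (m + 1)
            then 2 ^ (m + 1 - 2) * (2 ^ (m + 1 - 1) - (m + 1))
            else (m + 1).choose (v - a) * 2 ^ (m + 1 - 2))
          = (2 ^ (m + 1) - 2) * 2 ^ (m + 1 - 2) := by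
        have hc : ∀ v ∈ Finset.Ico (a + 1) (a + (m + 1)),
            (if v = a ∨ v = a + (m + 1)
              then 2 ^ (m + 1 - 2) * (2 ^ (m + 1 - 1) - (m + 1))
              else (m + 1).choose (v - a) * 2 ^ (m + 1 - 2))
            = (m + 1).choose (v - a) * 2 ^ (m + 1 - 2) := by
          intro v hv
          rw [Finset.mem_Ico] at hv
          rw [if_neg (by push_neg; omega)]
        rw [Finset.sum_congr rfl hc, Finset.sum_Ico_eq_sum_range]
        have hlen : a + (m + 1) - (a + 1) = m := by omega
        rw [hlen]
        have hc2 : ∀ i ∈ Finset.range m,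
            (m + 1).choose (a + 1 + i - a) * 2 ^ (m + 1 - 2)
            = (m + 1).choose (i + 1) * 2 ^ (m + 1 - 2) := by
          intro i _
          rw [show a + 1 + i - a = i + 1 from by omega]
        rw [Finset.sum_congr rfl hc2, ← Finset.sum_mul]
        congr 1
        -- ∑ i in range m, (m+1).choose (i+1) = 2^(m+1) - 2
        have h1 := Nat.sum_range_choose (m + 1)
        rw [Finset.sum_range_succ'] at h1
        -- h1 : (∑ i in range (m+1), (m+1).choose (i+1)) + (m+1).choose 0 = 2^(m+1)
        rw [Finset.sum_range_succ] at h1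
        -- now : ((∑ i in range m, (m+1).choose (i+1)) + (m+1).choose (m+1)) + (m+1).choose 0 = 2^(m+1)
        rw [Nat.choose_self, Nat.choose_zero_right] at h1
        omega
      rw [hmid]
      -- arithmetic finish
      have h2pow : m + 1 ≤ 2 ^ m := Nat.lt_two_pow_self
      rcases Nat.eq_zero_or_pos m with rfl | hm
      · norm_num
      · obtain ⟨X, hX⟩ : ∃ X, 2 ^ (m - 1) = X := ⟨_, rfl⟩
        have e1 : (2 : ℕ) ^ m = 2 * X := by
          rw [← hX, ← pow_succ']
          congr 1
          omega
        have e2 : (2 : ℕ) ^ (m + 1) = 4 * X := by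
          rw [pow_succ, e1]
          ring
        have e3 : m + 1 - 2 = m - 1 := by omega
        have e4 : m + 1 - 1 = m := by omega
        have e5 : m + 1 + 1 - 2 = m := by omega
        have e6 : m + 1 + 1 - 1 = m + 1 := by omega
        rw [e3, e4, e5, e6, hX, e1, e2]
        have hb1 : m + 1 ≤ 2 * X := by omega
        have hb2 : m + 1 + 1 ≤ 4 * X := by omega
        have hb3 : 2 ≤ 4 * X := by omega
        zify [hb1, hb2, hb3]
        ring

lemma kA_ofFn (n : ℕ) (f : Fin n → ℕ) :
    kA (List.ofFn f) = (Finset.univ.filter (fun i : Fin n =>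
      ∀ j : Fin n, (j : ℕ) < (i : ℕ) → f j + 1 ≠ f i ∧ f i + 1 ≠ f j)).card := by
  induction n with
  | zero => simp [kA_nil]
  | succ n ih =>
      rw [List.ofFn_succ', List.concat_eq_append, kA_concat,
        ih (fun i => f i.castSucc)]
      rw [Fin.univ_castSuccEmb, Finset.filter_cons, apply_ite Finset.card,
        Finset.card_cons, Finset.filter_map, Finset.card_map]
      have hQ : Finset.filter ((fun i : Fin (n + 1) =>
            ∀ j : Fin (n + 1), (j : ℕ) < (i : ℕ) → f j + 1 ≠ f i ∧ f i + 1 ≠ f j)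
              ∘ Fin.castSuccEmb) Finset.univ
          = Finset.filter (fun i : Fin n =>
            ∀ j : Fin n, (j : ℕ) < (i : ℕ) →
              f j.castSucc + 1 ≠ f i.castSucc ∧ f i.castSucc + 1 ≠ f j.castSucc)
              Finset.univ := by
        apply Finset.filter_congr
        intro i _
        simp only [Function.comp_apply]
        constructor
        · intro h j hj
          have h2 := h j.castSucc (by simpa using hj)
          simpa using h2
        · intro h j hj
          have hji : (j : ℕ) < (i : ℕ) := by simpa using hj
          have hjn : (j : ℕ) < n := by have := i.isLt; omega
          have hje : j = Fin.castSucc ⟨(j : ℕ), hjn⟩ := by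
            apply Fin.ext
            simp
          rw [hje]
          exact h ⟨(j : ℕ), hjn⟩ hji
      rw [hQ]
      have hcond : nbrFreeL (f (Fin.last n)) (List.ofFn fun i => f i.castSucc) ↔
          (∀ j : Fin (n + 1), (j : ℕ) < ((Fin.last n : Fin (n + 1)) : ℕ) →
            f j + 1 ≠ f (Fin.last n) ∧ f (Fin.last n) + 1 ≠ f j) := by
        constructor
        · intro h j hj
          simp only [Fin.val_last] at hj
          have hmem : f j ∈ List.ofFn (fun i : Fin n => f i.castSucc) := by
            rw [List.mem_ofFn]
            refine ⟨⟨(j : ℕ), hj⟩, ?_⟩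
            have he : Fin.castSucc (⟨(j : ℕ), hj⟩ : Fin n) = j := Fin.ext (by simp)
            rw [he]
          exact h (f j) hmem
        · intro h u hu
          rw [List.mem_ofFn] at hu
          obtain ⟨i, rfl⟩ := hu
          exact h i.castSucc (by simp)
      by_cases hc : nbrFreeL (f (Fin.last n)) (List.ofFn fun i => f i.castSucc)
      · rw [if_pos hc, if_pos (hcond.mp hc)]
      · rw [if_neg hc, if_neg (fun h2 => hc (hcond.mpr h2))]
        exact Nat.add_zero _

lemma card_filter_split (n : ℕ) (hn : 1 ≤ n) (Q : Fin n → Prop)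
    (hQ0 : ∀ i : Fin n, (i : ℕ) = 0 → Q i) :
    (Finset.univ.filter Q).card
      = (Finset.univ.filter (fun i : Fin n => 0 < (i : ℕ) ∧ Q i)).card + 1 := by
  have h0 : (0 : ℕ) < n := hn
  have hins : Finset.univ.filter Q
      = insert (⟨0, h0⟩ : Fin n) (Finset.univ.filter (fun i : Fin n => 0 < (i : ℕ) ∧ Q i)) := by
    ext i
    simp only [Finset.mem_filter, Finset.mem_insert, Finset.mem_univ, true_and]
    constructor
    · intro h
      rcases Nat.eq_zero_or_pos (i : ℕ) with hi | hi
      · left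
        apply Fin.ext
        simpa using hi
      · right
        exact ⟨hi, h⟩
    · rintro (rfl | ⟨_, h⟩)
      · exact hQ0 _ rfl
      · exact h
  rw [hins, Finset.card_insert_of_notMem]
  simp only [Finset.mem_filter, Finset.mem_univ, true_and, not_and]
  intro h
  simp at h

lemma numKinks_eq (n : ℕ) (hn : 1 ≤ n) (π : Equiv.Perm (Fin n)) :
    kA (List.ofFn (fun i => (π i : ℕ))) = numKinks π + 1 := by
  rw [kA_ofFn]
  show _ = (Finset.univ.filter (fun i : Fin n => 0 < (i : ℕ) ∧ ∀ j : Fin n,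
      (j : ℕ) < (i : ℕ) →
      (π j : ℕ) + 1 ≠ (π i : ℕ) ∧ (π i : ℕ) + 1 ≠ (π j : ℕ))).card + 1
  have h := card_filter_split n hn
    (fun i : Fin n => ∀ j : Fin n, (j : ℕ) < (i : ℕ) →
      (π j : ℕ) + 1 ≠ (π i : ℕ) ∧ (π i : ℕ) + 1 ≠ (π j : ℕ))
    (fun i hi j hj => by omega)
  convert h using 2
  · ext x
    simp only [Finset.mem_filter]
  · apply congrArg Finset.card
    ext x
    simp only [Finset.mem_filter]

lemma F_eq_Kaux (n : ℕ) (hn : 1 ≤ n) : F n 1 = Kaux (Finset.range n) 2 := by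
  unfold F Kaux
  apply Finset.card_bij (fun π _ => List.ofFn (fun i => ((π : Equiv.Perm (Fin n)) i : ℕ)))
  · intro π hπ
    rw [Finset.mem_filter] at hπ
    rw [Finset.mem_filter, mem_ord]
    refine ⟨⟨?_, ?_⟩, ?_⟩
    · rw [List.nodup_ofFn]
      intro i j hij
      exact π.injective (Fin.val_injective hij)
    · ext x
      simp only [List.mem_toFinset, List.mem_ofFn, Set.mem_range, Finset.mem_range]
      constructor
      · rintro ⟨i, rfl⟩
        exact (π i).isLt
      · intro hx
        exact ⟨π.symm ⟨x, hx⟩, by simp⟩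
    · rw [numKinks_eq n hn π, hπ.2]
  · intro π hπ σ hσ h
    have h2 := List.ofFn_injective h
    apply Equiv.ext
    intro i
    apply Fin.val_injective
    exact congrFun h2 i
  · intro l hl
    rw [Finset.mem_filter, mem_ord] at hl
    obtain ⟨⟨hnd, hTF⟩, hk⟩ := hl
    have hlen : l.length = n := by
      have h2 := congrArg Finset.card hTF
      rwa [List.toFinset_card_of_nodup hnd, Finset.card_range] at h2
    have hmem : ∀ i : Fin l.length, l.get i < n := by
      intro i
      have h3 : l.get i ∈ l.toFinset := List.mem_toFinset.mpr (l.get_mem i)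
      rw [hTF, Finset.mem_range] at h3
      exact h3
    have hinj : Function.Injective
        (fun i : Fin n => (⟨l.get (Fin.cast hlen.symm i), hmem _⟩ : Fin n)) := by
      intro i j hij
      have h1 : l.get (Fin.cast hlen.symm i) = l.get (Fin.cast hlen.symm j) :=
        congrArg Fin.val hij
      have h2 := (List.nodup_iff_injective_get.mp hnd) h1
      have h3 := congrArg Fin.val h2
      exact Fin.ext (by simpa using h3)
    have hbij := Finite.injective_iff_bijective.mp hinj
    refine ⟨Equiv.ofBijective _ hbij, Finset.mem_filter.mpr ⟨Finset.mem_univ _, ?_⟩, ?_⟩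
    · have hofn : List.ofFn (fun i : Fin n => ((Equiv.ofBijective _ hbij) i : ℕ)) = l := by
        apply List.ext_get
        · simp [hlen]
        · intro i h1 h2
          rw [List.get_ofFn]
          rfl
      have h4 := numKinks_eq n hn (Equiv.ofBijective _ hbij)
      rw [hofn, hk] at h4
      omega
    · apply List.ext_get
      · simp [hlen]
      · intro i h1 h2
        rw [List.get_ofFn]
        rfl

end KinkProof

theorem F_one_kink (n : ℕ) (hn : 3 ≤ n) : F n 1 = 2 ^ (n - 2) * (2 ^ (n - 1) - n) := by
  rw [KinkProof.F_eq_Kaux n (by omega), Finset.range_eq_Ico]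
  have := KinkProof.Kaux_Ico_two 0 n (by omega)
  simpa using this
end

section
/- For every n ≥ 5, the number of permutations of {1,…,n} with exactly two kinks equals (1/32)·6^n − (1/16)·4^n·(n−1) + (1/32)·2^n·(2n² − 4n − 1). -/
open scoped Classical
open Finset

theorem perm_apply_inv_self {α : Type*} (f : Equiv.Perm α) (x : α) : f (f⁻¹ x) = x :=
  (Equiv.eq_symm_apply f).mp rfl

theorem perm_inv_apply_self {α : Type*} (f : Equiv.Perm α) (x : α) : f⁻¹ (f x) = x :=
  Equiv.Perm.inv_eq_iff_eq.mpr rfl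


def isMin {n : ℕ} (σ : Equiv.Perm (Fin n)) (i : Fin n) : Prop :=
  (∀ j : Fin n, (j:ℕ)+1 = (i:ℕ) → (σ i : ℕ) < (σ j : ℕ)) ∧
  (∀ j : Fin n, (i:ℕ)+1 = (j:ℕ) → (σ i : ℕ) < (σ j : ℕ))

noncomputable def M {n : ℕ} (σ : Equiv.Perm (Fin n)) : ℕ :=
  (Finset.univ.filter (fun i => isMin σ i)).card

lemma not_adjacent_min {n : ℕ} (σ : Equiv.Perm (Fin n)) (i j : Fin n)
    (hi : isMin σ i) (hj : isMin σ j) (h : (j:ℕ)+1 = (i:ℕ)) : False := by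
  have h1 := hi.1 j h
  have h2 := hj.2 i h
  omega

lemma min_of_zero {n : ℕ} (hn : 0 < n) (σ : Equiv.Perm (Fin n)) :
    isMin σ (σ⁻¹ ⟨0, hn⟩) := by
  constructor <;> intro j hj <;>
  · have h0 : σ (σ⁻¹ ⟨0, hn⟩) = ⟨0, hn⟩ := perm_apply_inv_self σ _
    rw [h0]
    have hne : σ j ≠ ⟨0, hn⟩ := by
      intro hc
      have : j = σ⁻¹ ⟨0, hn⟩ := by
        have := congrArg σ.symm hc
        simpa using this
      omega
    have : (⟨0, hn⟩ : Fin n) ≠ σ j := Ne.symm hne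
    have := Fin.val_ne_iff.mpr this
    simp only [Fin.lt_def]
    have h00 : ((⟨0, hn⟩ : Fin n) : ℕ) = 0 := rfl
    omega

lemma one_le_M {n : ℕ} (hn : 0 < n) (σ : Equiv.Perm (Fin n)) : 1 ≤ M σ := by
  have hm : σ⁻¹ ⟨0, hn⟩ ∈ Finset.univ.filter (fun i => isMin σ i) := by
    simp only [mem_filter, mem_univ, true_and]
    exact min_of_zero hn σ
  have := Finset.card_pos.mpr ⟨_, hm⟩
  simpa [M] using this

noncomputable section
/-- insert value 0 at position p, shifting other values up and positions right of p -/
def ins {n : ℕ} (σ : Equiv.Perm (Fin n)) (p : Fin (n+1)) : Equiv.Perm (Fin (n+1)) :=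
  (finSuccEquiv' p).trans ((Equiv.optionCongr σ).trans (finSuccEquiv n).symm)

lemma ins_at {n : ℕ} (σ : Equiv.Perm (Fin n)) (p : Fin (n+1)) : ins σ p p = 0 := by
  simp [ins, finSuccEquiv'_at]

lemma ins_succAbove {n : ℕ} (σ : Equiv.Perm (Fin n)) (p : Fin (n+1)) (i : Fin n) :
    ins σ p (p.succAbove i) = (σ i).succ := by
  simp [ins, finSuccEquiv'_succAbove]

lemma ins_apply_lt {n : ℕ} (σ : Equiv.Perm (Fin n)) (p : Fin (n+1)) (i : Fin (n+1))
    (h : (i:ℕ) < (p:ℕ)) (hn : (i:ℕ) < n) :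
    ((ins σ p i : Fin (n+1)) : ℕ) = (σ ⟨i, hn⟩ : ℕ) + 1 := by
  have he : p.succAbove ⟨i, hn⟩ = i := by
    rw [Fin.succAbove_of_castSucc_lt]
    · ext; simp
    · rw [Fin.lt_def]; simpa using h
  conv_lhs => rw [← he]
  rw [ins_succAbove]
  simp

lemma ins_apply_gt {n : ℕ} (σ : Equiv.Perm (Fin n)) (p : Fin (n+1)) (i : Fin (n+1))
    (h : (p:ℕ) < (i:ℕ)) (hn : (i:ℕ) - 1 < n) :
    ((ins σ p i : Fin (n+1)) : ℕ) = (σ ⟨(i:ℕ)-1, hn⟩ : ℕ) + 1 := by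
  have he : p.succAbove ⟨(i:ℕ)-1, hn⟩ = i := by
    rw [Fin.succAbove_of_le_castSucc]
    · ext; simp; omega
    · rw [Fin.le_def]; simp; omega
  conv_lhs => rw [← he]
  rw [ins_succAbove]
  simp

lemma ins_apply_ne_zero {n : ℕ} (σ : Equiv.Perm (Fin n)) (p : Fin (n+1)) (i : Fin (n+1))
    (h : i ≠ p) : 0 < ((ins σ p i : Fin (n+1)) : ℕ) := by
  obtain ⟨j, hj⟩ := Fin.exists_succAbove_eq h
  rw [← hj, ins_succAbove]
  simp

lemma ins_injective {n : ℕ} :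
    Function.Injective (fun x : Equiv.Perm (Fin n) × Fin (n+1) => ins x.1 x.2) := by
  rintro ⟨σ, p⟩ ⟨τ, q⟩ h
  simp only at h
  have hpq : p = q := by
    have h1 : ins σ p p = 0 := ins_at σ p
    have h2 : ins τ q q = 0 := ins_at τ q
    have := h ▸ h1
    have : ins τ q p = 0 := by rw [← h]; exact h1
    have := h2 ▸ this
    exact (Equiv.injective (ins τ q)) (by rw [this, h2])
  subst hpq
  have hστ : σ = τ := by
    ext i
    have := congrArg (· (p.succAbove i)) (congrArg Equiv.toFun h)
    simp only [Equiv.toFun_as_coe, ins_succAbove] at this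
    have : (σ i).succ = (τ i).succ := by
      have h' : ins σ p (p.succAbove i) = ins τ p (p.succAbove i) := by rw [h]
      rwa [ins_succAbove, ins_succAbove] at h'
    have hv : ((σ i : Fin n):ℕ) = ((τ i : Fin n):ℕ) := by
      have := congrArg Fin.val this
      simpa using this
    exact hv
  rw [hστ]

lemma ins_surjective {n : ℕ} :
    Function.Surjective (fun x : Equiv.Perm (Fin n) × Fin (n+1) => ins x.1 x.2) := by
  have h1 : Fintype.card (Equiv.Perm (Fin n) × Fin (n+1)) =
      Fintype.card (Equiv.Perm (Fin (n+1))) := by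
    simp [Fintype.card_perm, Nat.factorial_succ, Nat.mul_comm]
  exact ((Fintype.bijective_iff_injective_and_card _).mpr ⟨ins_injective, h1⟩).surjective
end

lemma succAbove_val {n : ℕ} (p : Fin (n+1)) (j : Fin n) :
    ((p.succAbove j : Fin (n+1)) : ℕ) = if (j:ℕ) < (p:ℕ) then (j:ℕ) else (j:ℕ)+1 := by
  by_cases h : (j:ℕ) < (p:ℕ)
  · rw [if_pos h, Fin.succAbove_of_castSucc_lt]
    · simp
    · rw [Fin.lt_def]; simpa using h
  · rw [if_neg h, Fin.succAbove_of_le_castSucc]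
    · simp
    · rw [Fin.le_def]; simpa using not_lt.mp h

lemma ins_val {n : ℕ} (σ : Equiv.Perm (Fin n)) (p : Fin (n+1)) (i : Fin (n+1))
    (m : ℕ) (hm : m < n)
    (h : ((i:ℕ) < (p:ℕ) ∧ m = (i:ℕ)) ∨ ((p:ℕ) < (i:ℕ) ∧ m = (i:ℕ) - 1)) :
    ((ins σ p i : Fin (n+1)) : ℕ) = (σ ⟨m, hm⟩ : ℕ) + 1 := by
  rcases h with ⟨h1, rfl⟩ | ⟨h1, rfl⟩
  · exact ins_apply_lt σ p i h1 hm
  · exact ins_apply_gt σ p i h1 hm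

lemma ins_at_val {n : ℕ} (σ : Equiv.Perm (Fin n)) (p : Fin (n+1)) :
    ((ins σ p p : Fin (n+1)) : ℕ) = 0 := by rw [ins_at]; rfl

lemma isMin_ins_self {n : ℕ} (σ : Equiv.Perm (Fin n)) (p : Fin (n+1)) :
    isMin (ins σ p) p := by
  constructor <;> intro w hw <;>
  · have hwp : w ≠ p := by
      intro hc; subst hc; omega
    have h1 := ins_apply_ne_zero σ p w hwp
    have h2 := ins_at_val σ p
    omega

lemma isMin_ins_iff {n : ℕ} (σ : Equiv.Perm (Fin n)) (p : Fin (n+1)) (j : Fin n) :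
    isMin (ins σ p) (p.succAbove j) ↔
      (isMin σ j ∧ (p:ℕ) ≠ (j:ℕ) ∧ (p:ℕ) ≠ (j:ℕ)+1) := by
  have hvv : ((p.succAbove j : Fin (n+1)):ℕ) = if (j:ℕ) < (p:ℕ) then (j:ℕ) else (j:ℕ)+1 := succAbove_val p j
  have hjn : (j:ℕ) < n := j.isLt
  have hpn : (p:ℕ) ≤ n := Fin.is_le p
  have htv : ((ins σ p (p.succAbove j) : Fin (n+1)) : ℕ) = (σ j : ℕ) + 1 := by
    rw [ins_succAbove]; simp
  have htp : ((ins σ p p : Fin (n+1)) : ℕ) = 0 := ins_at_val σ p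
  constructor
  · rintro ⟨h1, h2⟩
    have hadj1 : (p:ℕ) ≠ (j:ℕ) := by
      intro he
      have hvval : ((p.succAbove j : Fin (n+1)):ℕ) = (j:ℕ)+1 := by rw [hvv, if_neg]; omega
      have := h1 p (by omega)
      omega
    have hadj2 : (p:ℕ) ≠ (j:ℕ)+1 := by
      intro he
      have hvval : ((p.succAbove j : Fin (n+1)):ℕ) = (j:ℕ) := by rw [hvv, if_pos]; omega
      have := h2 p (by omega)
      omega
    refine ⟨⟨?_, ?_⟩, hadj1, hadj2⟩
    · -- left neighbours in σ
      intro j' hj'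
      by_cases hc : (j':ℕ) < (p:ℕ)
      · -- lift j' to position (j':ℕ)
        have hcc : (j:ℕ) < (p:ℕ) := by omega
        have hvval : ((p.succAbove j : Fin (n+1)):ℕ) = (j:ℕ) := by rw [hvv, if_pos hcc]
        have hw := h1 ⟨(j':ℕ), by omega⟩ (by simp; omega)
        have hwv := ins_val σ p ⟨(j':ℕ), by omega⟩ (j':ℕ) j'.isLt
          (Or.inl ⟨by simpa using hc, rfl⟩)
        rw [Fin.eta] at hwv
        omega
      · -- p ≤ j' < j, lift to (j':ℕ)+1
        have hcc : ¬ (j:ℕ) < (p:ℕ) := by omega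
        have hvval : ((p.succAbove j : Fin (n+1)):ℕ) = (j:ℕ)+1 := by rw [hvv, if_neg hcc]
        have hw := h1 ⟨(j':ℕ)+1, by omega⟩ (by simp; omega)
        have hwv := ins_val σ p ⟨(j':ℕ)+1, by omega⟩ (j':ℕ) j'.isLt
          (Or.inr ⟨by simp; omega, by simp⟩)
        rw [Fin.eta] at hwv
        omega
    · -- right neighbours in σ
      intro j' hj'
      by_cases hc : (j':ℕ) < (p:ℕ)
      · have hcc : (j:ℕ) < (p:ℕ) := by omega
        have hvval : ((p.succAbove j : Fin (n+1)):ℕ) = (j:ℕ) := by rw [hvv, if_pos hcc]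
        have hw := h2 ⟨(j':ℕ), by omega⟩ (by simp; omega)
        have hwv := ins_val σ p ⟨(j':ℕ), by omega⟩ (j':ℕ) j'.isLt
          (Or.inl ⟨by simpa using hc, rfl⟩)
        rw [Fin.eta] at hwv
        omega
      · -- p ≤ j' = j+1, p ≠ j+1, p ≠ j so p < j
        have hcc : ¬ (j:ℕ) < (p:ℕ) := by omega
        have hvval : ((p.succAbove j : Fin (n+1)):ℕ) = (j:ℕ)+1 := by rw [hvv, if_neg hcc]
        have hw := h2 ⟨(j':ℕ)+1, by omega⟩ (by simp; omega)
        have hwv := ins_val σ p ⟨(j':ℕ)+1, by omega⟩ (j':ℕ) j'.isLt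
          (Or.inr ⟨by simp; omega, by simp⟩)
        rw [Fin.eta] at hwv
        omega
  · rintro ⟨⟨h1, h2⟩, hadj1, hadj2⟩
    constructor
    · intro w hw
      by_cases hc : (j:ℕ) < (p:ℕ)
      · -- v = j, w = j-1 < p
        have hvval : ((p.succAbove j : Fin (n+1)):ℕ) = (j:ℕ) := by rw [hvv, if_pos hc]
        have hm : (j:ℕ) - 1 < n := by omega
        have hwv := ins_val σ p w ((j:ℕ)-1) hm (Or.inl ⟨by omega, by omega⟩)
        have := h1 ⟨(j:ℕ)-1, hm⟩ (by simp; omega)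
        omega
      · -- p ≤ j, p ≠ j so p < j; v = j+1, w = j > p
        have hvval : ((p.succAbove j : Fin (n+1)):ℕ) = (j:ℕ)+1 := by rw [hvv, if_neg hc]
        have hm : (j:ℕ) - 1 < n := by omega
        have hwv := ins_val σ p w ((j:ℕ)-1) hm (Or.inr ⟨by omega, by omega⟩)
        have := h1 ⟨(j:ℕ)-1, hm⟩ (by simp; omega)
        omega
    · intro w hw
      have hwn : (w:ℕ) ≤ n := Fin.is_le w
      by_cases hc : (j:ℕ) < (p:ℕ)
      · -- v = j, w = j+1; p ≠ j+1 so w < p (since p > j)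
        have hvval : ((p.succAbove j : Fin (n+1)):ℕ) = (j:ℕ) := by rw [hvv, if_pos hc]
        have hm : (j:ℕ) + 1 < n := by omega
        have hwv := ins_val σ p w ((j:ℕ)+1) hm (Or.inl ⟨by omega, by omega⟩)
        have := h2 ⟨(j:ℕ)+1, hm⟩ (by simp)
        omega
      · -- p < j; v = j+1, w = j+2 > p
        have hvval : ((p.succAbove j : Fin (n+1)):ℕ) = (j:ℕ)+1 := by rw [hvv, if_neg hc]
        have hm : (j:ℕ) + 1 < n := by omega
        have hwv := ins_val σ p w ((j:ℕ)+1) hm (Or.inr ⟨by omega, by omega⟩)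
        have := h2 ⟨(j:ℕ)+1, hm⟩ (by simp)
        omega

noncomputable section

def adjP {n : ℕ} (σ : Equiv.Perm (Fin n)) (p : Fin (n+1)) : Prop :=
  ∃ i : Fin n, isMin σ i ∧ ((p:ℕ) = (i:ℕ) ∨ (p:ℕ) = (i:ℕ)+1)

lemma minima_ins {n : ℕ} (σ : Equiv.Perm (Fin n)) (p : Fin (n+1)) :
    Finset.univ.filter (fun v => isMin (ins σ p) v) =
      insert p ((Finset.univ.filter
        (fun i : Fin n => isMin σ i ∧ (p:ℕ) ≠ (i:ℕ) ∧ (p:ℕ) ≠ (i:ℕ)+1)).image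
        (p.succAbove)) := by
  ext v
  simp only [mem_filter, mem_univ, true_and, mem_insert, mem_image]
  constructor
  · intro hmin
    by_cases hv : v = p
    · exact Or.inl hv
    · obtain ⟨j, hj⟩ := Fin.exists_succAbove_eq hv
      exact Or.inr ⟨j, (isMin_ins_iff σ p j).mp (hj ▸ hmin), hj⟩
  · rintro (h | ⟨j, hj, rfl⟩)
    · rw [h]; exact isMin_ins_self σ p
    · exact (isMin_ins_iff σ p j).mpr hj

lemma M_ins {n : ℕ} (σ : Equiv.Perm (Fin n)) (p : Fin (n+1)) :
    M (ins σ p) = if adjP σ p then M σ else M σ + 1 := by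
  have hM : M (ins σ p) = 1 + (Finset.univ.filter
      (fun i : Fin n => isMin σ i ∧ (p:ℕ) ≠ (i:ℕ) ∧ (p:ℕ) ≠ (i:ℕ)+1)).card := by
    rw [M, minima_ins, Finset.card_insert_of_notMem, Finset.card_image_of_injective _
      (Fin.succAbove_right_injective), add_comm]
    intro hc
    simp only [mem_image] at hc
    obtain ⟨j, -, hj⟩ := hc
    exact Fin.succAbove_ne p j hj
  by_cases hadj : adjP σ p
  · rw [if_pos hadj]
    obtain ⟨i₀, hi₀, hp₀⟩ := hadj
    have huniq : ∀ i : Fin n, isMin σ i → ((p:ℕ) = (i:ℕ) ∨ (p:ℕ) = (i:ℕ)+1) → i = i₀ := by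
      intro i hi hp
      by_contra hne
      have hvne : (i:ℕ) ≠ (i₀:ℕ) := fun hc => hne (Fin.val_injective hc)
      rcases hp with h1 | h1 <;> rcases hp₀ with h2 | h2
      · omega
      · exact not_adjacent_min σ i i₀ hi hi₀ (by omega)
      · exact not_adjacent_min σ i₀ i hi₀ hi (by omega)
      · omega
    have hset : Finset.univ.filter
        (fun i : Fin n => isMin σ i ∧ (p:ℕ) ≠ (i:ℕ) ∧ (p:ℕ) ≠ (i:ℕ)+1) =
        (Finset.univ.filter (fun i => isMin σ i)).erase i₀ := by
      ext i
      simp only [mem_filter, mem_univ, true_and, mem_erase]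
      constructor
      · rintro ⟨h1, h2, h3⟩
        refine ⟨fun hc => ?_, h1⟩
        subst hc
        rcases hp₀ with h | h <;> omega
      · rintro ⟨hne, h1⟩
        refine ⟨h1, fun hc => hne (huniq i h1 (Or.inl hc)), fun hc => hne (huniq i h1 (Or.inr hc))⟩
    have hmem : i₀ ∈ Finset.univ.filter (fun i => isMin σ i) := by
      simp [hi₀]
    rw [hM, hset, Finset.card_erase_of_mem hmem]
    have hpos : 0 < (Finset.univ.filter (fun i => isMin σ i)).card :=
      Finset.card_pos.mpr ⟨i₀, hmem⟩
    rw [M]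
    omega
  · rw [if_neg hadj]
    have hset : Finset.univ.filter
        (fun i : Fin n => isMin σ i ∧ (p:ℕ) ≠ (i:ℕ) ∧ (p:ℕ) ≠ (i:ℕ)+1) =
        Finset.univ.filter (fun i => isMin σ i) := by
      ext i
      simp only [mem_filter, mem_univ, true_and]
      constructor
      · rintro ⟨h1, -, -⟩; exact h1
      · intro h1
        refine ⟨h1, fun hc => hadj ⟨i, h1, Or.inl hc⟩, fun hc => hadj ⟨i, h1, Or.inr hc⟩⟩
    rw [hM, hset, M]
    omega

lemma card_adjP {n : ℕ} (σ : Equiv.Perm (Fin n)) :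
    (Finset.univ.filter (fun p : Fin (n+1) => adjP σ p)).card = 2 * M σ := by
  have hset : Finset.univ.filter (fun p : Fin (n+1) => adjP σ p) =
      (Finset.univ.filter (fun i => isMin σ i)).image Fin.castSucc ∪
      (Finset.univ.filter (fun i => isMin σ i)).image Fin.succ := by
    ext p
    simp only [mem_filter, mem_univ, true_and, mem_union, mem_image]
    constructor
    · rintro ⟨i, hi, h | h⟩
      · exact Or.inl ⟨i, hi, by ext; simp [h.symm]⟩
      · exact Or.inr ⟨i, hi, by ext; simp [h.symm]⟩
    · rintro (⟨i, hi, rfl⟩ | ⟨i, hi, rfl⟩)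
      · exact ⟨i, hi, Or.inl (by simp)⟩
      · exact ⟨i, hi, Or.inr (by simp)⟩
  rw [hset, Finset.card_union_of_disjoint, Finset.card_image_of_injective _
      (Fin.castSucc_injective n), Finset.card_image_of_injective _ (Fin.succ_injective n), M]
  · omega
  · rw [Finset.disjoint_left]
    rintro a ha hb
    simp only [mem_image, mem_filter, mem_univ, true_and] at ha hb
    obtain ⟨i, hi, rfl⟩ := ha
    obtain ⟨i', hi', he⟩ := hb
    have : (i:ℕ) = (i':ℕ) + 1 := by
      have := congrArg Fin.val he
      simpa using this.symm
    exact not_adjacent_min σ i i' hi hi' this.symm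

lemma two_M_le {n : ℕ} (σ : Equiv.Perm (Fin n)) : 2 * M σ ≤ n + 1 := by
  rw [← card_adjP σ]
  calc (Finset.univ.filter (fun p : Fin (n+1) => adjP σ p)).card
      ≤ (Finset.univ : Finset (Fin (n+1))).card := Finset.card_filter_le _ _
    _ = n + 1 := by simp

lemma card_not_adjP {n : ℕ} (σ : Equiv.Perm (Fin n)) :
    (Finset.univ.filter (fun p : Fin (n+1) => ¬ adjP σ p)).card = (n+1) - 2 * M σ := by
  have h := Finset.card_filter_add_card_filter_not
    (s := (Finset.univ : Finset (Fin (n+1)))) (p := fun p => adjP σ p)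
  rw [card_adjP] at h
  have : (Finset.univ : Finset (Fin (n+1))).card = n + 1 := by simp
  omega

end

noncomputable def Qm (n k : ℕ) : ℕ :=
  (Finset.univ.filter (fun σ : Equiv.Perm (Fin n) => M σ = k)).card

lemma Qm_eq_zero_of_lt {n k : ℕ} (h : n + 1 < 2 * k) : Qm n k = 0 := by
  rw [Qm, Finset.card_eq_zero, Finset.filter_eq_empty_iff]
  intro σ _
  intro hc
  have := two_M_le σ
  omega

lemma Qm_zero {n : ℕ} (hn : 0 < n) : Qm n 0 = 0 := by
  rw [Qm, Finset.card_eq_zero, Finset.filter_eq_empty_iff]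
  intro σ _
  have := one_le_M hn σ
  omega

lemma Qm_one_one : Qm 1 1 = 1 := by
  have h : (Finset.univ.filter (fun σ : Equiv.Perm (Fin 1) => M σ = 1)) = Finset.univ := by
    rw [Finset.filter_eq_self]
    intro σ _
    have h1 := one_le_M (by norm_num) σ
    have h2 := two_M_le σ
    omega
  rw [Qm, h]
  simp [Finset.card_univ, Fintype.card_perm]

lemma Qm_rec (n k : ℕ) :
    Qm (n+1) (k+1) = (2*(k+1)) * Qm n (k+1) + ((n+1) - 2*k) * Qm n k := by
  -- step 1 : transport to pairs
  have step1 : Qm (n+1) (k+1) =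
      (Finset.univ.filter (fun x : Equiv.Perm (Fin n) × Fin (n+1) =>
        M (ins x.1 x.2) = k + 1)).card := by
    rw [Qm]
    apply Finset.card_bij (fun (τ : Equiv.Perm (Fin (n+1))) _ =>
      (Classical.choose (ins_surjective τ)))
    · intro τ hτ
      have hspec := Classical.choose_spec (ins_surjective τ)
      simp only [mem_filter, mem_univ, true_and] at hτ ⊢
      rw [show (fun x : Equiv.Perm (Fin n) × Fin (n+1) => ins x.1 x.2)
        (Classical.choose (ins_surjective τ)) = ins (Classical.choose (ins_surjective τ)).1
          (Classical.choose (ins_surjective τ)).2 from rfl] at hspec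
      rw [hspec]
      exact hτ
    · intro τ1 h1 τ2 h2 he
      have s1 := Classical.choose_spec (ins_surjective τ1)
      have s2 := Classical.choose_spec (ins_surjective τ2)
      rw [← s1, ← s2, he]
    · intro x hx
      refine ⟨ins x.1 x.2, ?_, ?_⟩
      · simp only [mem_filter, mem_univ, true_and] at hx ⊢
        exact hx
      · have s := Classical.choose_spec (ins_surjective (ins x.1 x.2))
        exact ins_injective s
  -- step 2 : fiberwise over the permutation
  have step2 : (Finset.univ.filter (fun x : Equiv.Perm (Fin n) × Fin (n+1) =>
        M (ins x.1 x.2) = k + 1)).card =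
      ∑ σ : Equiv.Perm (Fin n),
        (Finset.univ.filter (fun p : Fin (n+1) => M (ins σ p) = k + 1)).card := by
    rw [Finset.card_eq_sum_card_fiberwise
      (f := fun x : Equiv.Perm (Fin n) × Fin (n+1) => x.1) (t := Finset.univ)
      (fun x _ => Finset.mem_univ _)]
    apply Finset.sum_congr rfl
    intro σ _
    apply Finset.card_bij (fun x _ => x.2)
    · intro x hx
      simp only [mem_filter, mem_univ, true_and] at hx ⊢
      rw [← hx.2]
      exact hx.1
    · intro x1 h1 x2 h2 he
      simp only [mem_filter, mem_univ, true_and] at h1 h2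
      exact Prod.ext (h1.2.trans h2.2.symm) he
    · intro p hp
      simp only [mem_filter, mem_univ, true_and] at hp
      exact ⟨(σ, p), by simp [hp], rfl⟩
  -- step 3 : per-permutation count
  have step3 : ∀ σ : Equiv.Perm (Fin n),
      (Finset.univ.filter (fun p : Fin (n+1) => M (ins σ p) = k + 1)).card =
      (2*(k+1)) * (if M σ = k+1 then 1 else 0) + ((n+1) - 2*k) * (if M σ = k then 1 else 0) := by
    intro σ
    by_cases h1 : M σ = k + 1
    · have hset : Finset.univ.filter (fun p : Fin (n+1) => M (ins σ p) = k + 1) =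
          Finset.univ.filter (fun p : Fin (n+1) => adjP σ p) := by
        apply Finset.filter_congr
        intro p _
        rw [M_ins]
        by_cases hadj : adjP σ p
        · simp [hadj, h1]
        · simp only [if_neg hadj]
          constructor
          · intro hc; omega
          · intro hc; exact absurd hc hadj
      rw [hset, card_adjP, h1, if_pos rfl, if_neg (by omega)]
      ring
    · by_cases h2 : M σ = k
      · have hset : Finset.univ.filter (fun p : Fin (n+1) => M (ins σ p) = k + 1) =
            Finset.univ.filter (fun p : Fin (n+1) => ¬ adjP σ p) := by
          apply Finset.filter_congr
          intro p _
          rw [M_ins]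
          by_cases hadj : adjP σ p
          · simp only [if_pos hadj]
            constructor
            · intro hc; omega
            · intro hc; exact absurd hadj hc
          · simp [hadj, h2]
        rw [hset, card_not_adjP, h2, if_neg (show ¬ k = k + 1 by omega), if_pos rfl]
        ring
      · have hset : Finset.univ.filter (fun p : Fin (n+1) => M (ins σ p) = k + 1) = ∅ := by
          rw [Finset.filter_eq_empty_iff]
          intro p _
          rw [M_ins]
          by_cases hadj : adjP σ p
          · simp only [if_pos hadj]; omega
          · simp only [if_neg hadj]; omega
        rw [hset, if_neg h1, if_neg h2]
        simp
  rw [step1, step2]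
  calc ∑ σ : Equiv.Perm (Fin n),
        (Finset.univ.filter (fun p : Fin (n+1) => M (ins σ p) = k + 1)).card
      = ∑ σ : Equiv.Perm (Fin n), ((2*(k+1)) * (if M σ = k+1 then 1 else 0)
          + ((n+1) - 2*k) * (if M σ = k then 1 else 0)) := by
        exact Finset.sum_congr rfl (fun σ _ => step3 σ)
    _ = (2*(k+1)) * Qm n (k+1) + ((n+1) - 2*k) * Qm n k := by
        rw [Finset.sum_add_distrib, ← Finset.mul_sum, ← Finset.mul_sum]
        rw [Qm, Qm, Finset.card_filter, Finset.card_filter]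

lemma q1 (n : ℕ) (hn : 1 ≤ n) : (Qm n 1 : ℚ) = 2^n / 2 := by
  induction n, hn using Nat.le_induction with
  | base => rw [Qm_one_one]; norm_num
  | succ n hn ih =>
    have h := Qm_rec n 0
    simp only [Nat.mul_zero, Nat.sub_zero] at h
    rw [Qm_zero (by omega)] at h
    have : (Qm (n+1) 1 : ℚ) = 2 * (Qm n 1 : ℚ) := by
      rw [h]; push_cast; ring
    rw [this, ih, pow_succ]
    ring

lemma q2 (n : ℕ) (hn : 1 ≤ n) : (Qm n 2 : ℚ) = 4^n/8 - n*2^n/4 := by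
  induction n, hn using Nat.le_induction with
  | base =>
    rw [Qm_eq_zero_of_lt (by omega)]
    norm_num
  | succ n hn ih =>
    have h := Qm_rec n 1
    have hc : ((n + 1 - 2 * 1 : ℕ) : ℚ) = (n : ℚ) - 1 := by
      have : (n + 1 - 2 * 1 : ℕ) = n - 1 := by omega
      rw [this, Nat.cast_sub hn]
      norm_num
    have : (Qm (n+1) 2 : ℚ) = 4 * (Qm n 2 : ℚ) + ((n:ℚ) - 1) * (Qm n 1 : ℚ) := by
      rw [h]; push_cast [Nat.cast_sub hn]; ring
    rw [this, ih, q1 n hn, pow_succ, pow_succ]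
    push_cast
    ring

lemma q3 (n : ℕ) (hn : 3 ≤ n) :
    (Qm n 3 : ℚ) = 6^n/32 - ((n:ℚ)-1)*4^n/16 + (2*(n:ℚ)^2-4*n-1)*2^n/32 := by
  induction n, hn using Nat.le_induction with
  | base =>
    rw [Qm_eq_zero_of_lt (by omega)]
    norm_num
  | succ n hn ih =>
    have h := Qm_rec n 2
    have hc : ((n + 1 - 2 * 2 : ℕ) : ℚ) = (n : ℚ) - 3 := by
      have : (n + 1 - 2 * 2 : ℕ) = n - 3 := by omega
      rw [this, Nat.cast_sub hn]
      norm_num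
    have : (Qm (n+1) 3 : ℚ) = 6 * (Qm n 3 : ℚ) + ((n:ℚ) - 3) * (Qm n 2 : ℚ) := by
      rw [h]; push_cast [Nat.cast_sub hn]; ring
    rw [this, ih, q2 n (by omega), pow_succ, pow_succ, pow_succ]
    push_cast
    ring

def kinkP {n : ℕ} (π : Equiv.Perm (Fin n)) (i : Fin n) : Prop :=
  0 < (i : ℕ) ∧ ∀ j : Fin n, (j : ℕ) < (i : ℕ) →
      (π j : ℕ) + 1 ≠ (π i : ℕ) ∧ (π i : ℕ) + 1 ≠ (π j : ℕ)

lemma numKinks_def {n : ℕ} (π : Equiv.Perm (Fin n)) :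
    numKinks π = (Finset.univ.filter (fun i : Fin n => kinkP π i)).card := by
  unfold numKinks kinkP
  congr!

lemma min_iff_kink {n : ℕ} (π : Equiv.Perm (Fin n)) (v : Fin n) :
    isMin π⁻¹ v ↔ ((π⁻¹ v : ℕ) = 0 ∨ kinkP π (π⁻¹ v)) := by
  constructor
  · rintro ⟨h1, h2⟩
    by_cases h0 : (π⁻¹ v : ℕ) = 0
    · exact Or.inl h0
    · refine Or.inr ⟨by omega, fun j hj => ⟨?_, ?_⟩⟩
      · intro hc
        rw [perm_apply_inv_self] at hc
        have := h1 (π j) hc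
        rw [perm_inv_apply_self] at this
        omega
      · intro hc
        rw [perm_apply_inv_self] at hc
        have := h2 (π j) hc
        rw [perm_inv_apply_self] at this
        omega
  · intro h
    constructor
    · intro w hw
      have hne : (π⁻¹ w : ℕ) ≠ (π⁻¹ v : ℕ) := by
        intro hc
        have : π⁻¹ w = π⁻¹ v := Fin.val_injective hc
        have : w = v := (Equiv.injective π⁻¹) this
        omega
      rcases h with h0 | ⟨hpos, hK⟩
      · omega
      · by_contra hnot
        have hlt : (π⁻¹ w : ℕ) < (π⁻¹ v : ℕ) := by omega
        have := (hK (π⁻¹ w) hlt).1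
        rw [perm_apply_inv_self, perm_apply_inv_self] at this
        omega
    · intro w hw
      have hne : (π⁻¹ w : ℕ) ≠ (π⁻¹ v : ℕ) := by
        intro hc
        have : π⁻¹ w = π⁻¹ v := Fin.val_injective hc
        have : w = v := (Equiv.injective π⁻¹) this
        omega
      rcases h with h0 | ⟨hpos, hK⟩
      · omega
      · by_contra hnot
        have hlt : (π⁻¹ w : ℕ) < (π⁻¹ v : ℕ) := by omega
        have := (hK (π⁻¹ w) hlt).2
        rw [perm_apply_inv_self, perm_apply_inv_self] at this
        omega

lemma M_inv_eq {n : ℕ} (hn : 0 < n) (π : Equiv.Perm (Fin n)) :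
    M π⁻¹ = numKinks π + 1 := by
  have himg : Finset.univ.filter (fun v => isMin π⁻¹ v) =
      (Finset.univ.filter (fun i : Fin n => (i:ℕ) = 0 ∨ kinkP π i)).image π := by
    ext v
    simp only [mem_filter, mem_univ, true_and, mem_image]
    constructor
    · intro hmin
      exact ⟨π⁻¹ v, (min_iff_kink π v).mp hmin, perm_apply_inv_self π v⟩
    · rintro ⟨i, hi, rfl⟩
      apply (min_iff_kink π (π i)).mpr
      rwa [perm_inv_apply_self]
  have hsplit : Finset.univ.filter (fun i : Fin n => (i:ℕ) = 0 ∨ kinkP π i) =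
      insert ⟨0, hn⟩ (Finset.univ.filter (fun i : Fin n => kinkP π i)) := by
    ext i
    simp only [mem_filter, mem_univ, true_and, mem_insert]
    constructor
    · rintro (h0 | hk)
      · exact Or.inl (Fin.val_injective (by simpa using h0))
      · exact Or.inr hk
    · rintro (rfl | hk)
      · exact Or.inl rfl
      · exact Or.inr hk
  have hnotmem : (⟨0, hn⟩ : Fin n) ∉ Finset.univ.filter (fun i : Fin n => kinkP π i) := by
    simp only [mem_filter, mem_univ, true_and]
    intro hc
    exact absurd hc.1 (by simp)
  rw [M, himg, Finset.card_image_of_injective _ (Equiv.injective π), hsplit,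
    Finset.card_insert_of_notMem hnotmem, numKinks_def]

lemma F_eq_Qm (n d : ℕ) (hn : 0 < n) : F n d = Qm n (d+1) := by
  rw [F, Qm]
  apply Finset.card_bij (fun π _ => π⁻¹)
  · intro π hπ
    simp only [mem_filter, mem_univ, true_and] at hπ ⊢
    rw [M_inv_eq hn, hπ]
  · intro π1 _ π2 _ he
    exact inv_injective he
  · intro σ hσ
    simp only [mem_filter, mem_univ, true_and] at hσ
    refine ⟨σ⁻¹, ?_, by simp⟩
    simp only [mem_filter, mem_univ, true_and]
    have := M_inv_eq hn σ⁻¹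
    rw [inv_inv, hσ] at this
    omega

theorem F_two_kinks (n : ℕ) (hn : 5 ≤ n) :
    (F n 2 : ℚ) = (1 / 32) * 6 ^ n - (1 / 16) * 4 ^ n * ((n : ℚ) - 1)
      + (1 / 32) * 2 ^ n * (2 * (n : ℚ) ^ 2 - 4 * (n : ℚ) - 1) := by
  rw [F_eq_Qm n 2 (by omega)]
  rw [q3 n (by omega)]
  ring
end

section
/- For fixed d ≥ 0 there exists a constant C > 0 such that for all n ≥ 2, the number of permutations of {1,…,n} with exactly d kinks is at most C·(2(d+1))^n. -/
open scoped Classical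

namespace FKink
variable {n : ℕ}
def tm (π : Equiv.Perm (Fin n)) (v : Fin n) : Fin n := π.symm v
def nxt (v : Fin n) : Fin n := if h : (v : ℕ) + 1 < n then ⟨(v : ℕ) + 1, h⟩ else v
def prv (v : Fin n) : Fin n :=
  if h : 0 < (v : ℕ) then ⟨(v : ℕ) - 1, by have := v.isLt; omega⟩ else v
def asc (π : Equiv.Perm (Fin n)) (v : Fin n) : Prop := tm π v ≤ tm π (nxt v)
def isMin (π : Equiv.Perm (Fin n)) (v : Fin n) : Prop :=
  (∀ u : Fin n, (u : ℕ) + 1 = (v : ℕ) → tm π v < tm π u) ∧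
  (∀ u : Fin n, (v : ℕ) + 1 = (u : ℕ) → tm π v < tm π u)
lemma tm_inj (π : Equiv.Perm (Fin n)) : Function.Injective (tm π) := π.symm.injective
lemma nxt_eq (v : Fin n) (h : (v : ℕ) + 1 < n) : nxt v = ⟨(v : ℕ) + 1, h⟩ := by simp [nxt, h]
lemma nxt_eq_self (v : Fin n) (h : ¬ (v : ℕ) + 1 < n) : nxt v = v := by simp [nxt, h]
lemma prv_eq (v : Fin n) (h : 0 < (v : ℕ)) :
    prv v = ⟨(v : ℕ) - 1, by have := v.isLt; omega⟩ := by simp [prv, h]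
lemma asc_of_last (π : Equiv.Perm (Fin n)) (v : Fin n) (h : ¬ (v : ℕ) + 1 < n) :
    asc π v := by unfold asc; rw [nxt_eq_self v h]
lemma asc_lt (π : Equiv.Perm (Fin n)) (v : Fin n) (h : (v : ℕ) + 1 < n)
    (ha : asc π v) : tm π v < tm π (nxt v) := by
  refine lt_of_le_of_ne ha (fun he => ?_)
  have := tm_inj π he
  rw [nxt_eq v h] at this
  have := congrArg Fin.val this
  simp at this
lemma asc_iff_lt (π : Equiv.Perm (Fin n)) (v : Fin n) (h : (v : ℕ) + 1 < n) :
    asc π v ↔ tm π v < tm π ⟨(v : ℕ) + 1, h⟩ := by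
  constructor
  · intro ha; have := asc_lt π v h ha; rwa [nxt_eq v h] at this
  · intro hlt; unfold asc; rw [nxt_eq v h]; exact le_of_lt hlt

lemma isMin_iff (π : Equiv.Perm (Fin n)) (v : Fin n) :
    isMin π v ↔ asc π v ∧ ((v : ℕ) = 0 ∨ ¬ asc π (prv v)) := by
  constructor
  · rintro ⟨h1, h2⟩
    constructor
    · by_cases hv : (v : ℕ) + 1 < n
      · rw [asc_iff_lt π v hv]
        exact h2 ⟨(v : ℕ) + 1, hv⟩ rfl
      · exact asc_of_last π v hv
    · by_cases h0 : (v : ℕ) = 0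
      · exact Or.inl h0
      · refine Or.inr (fun hap => ?_)
        have h0' : 0 < (v : ℕ) := Nat.pos_of_ne_zero h0
        have hpv : (prv v : ℕ) + 1 = (v : ℕ) := by rw [prv_eq v h0']; simp; omega
        have hlt := h1 (prv v) hpv
        have hpn : (prv v : ℕ) + 1 < n := by rw [hpv]; exact v.isLt
        have := asc_lt π (prv v) hpn hap
        have hnx : nxt (prv v) = v := by
          rw [nxt_eq (prv v) hpn]; apply Fin.ext; simp [hpv]
        rw [hnx] at this
        exact absurd this (not_lt.mpr (le_of_lt hlt))
  · rintro ⟨ha, h0⟩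
    constructor
    · intro u hu
      rcases h0 with h0 | h0
      · omega
      · have h0' : 0 < (v : ℕ) := by omega
        have hueq : prv v = u := by
          apply Fin.ext; rw [prv_eq v h0']; simp; omega
        rw [hueq] at h0
        have hpn : (u : ℕ) + 1 < n := by rw [hu]; exact v.isLt
        have hnx : nxt u = v := by
          rw [nxt_eq u hpn]; apply Fin.ext; simp [hu]
        rcases lt_or_ge (tm π v) (tm π u) with h | h
        · exact h
        · exfalso; apply h0; unfold asc; rw [hnx]; exact h
    · intro u hu
      have hv : (v : ℕ) + 1 < n := by rw [hu]; exact u.isLt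
      have hueq : u = (⟨(v : ℕ) + 1, hv⟩ : Fin n) := by apply Fin.ext; simp; omega
      subst hueq
      exact (asc_iff_lt π v hv).mp ha

noncomputable def mcount (π : Equiv.Perm (Fin n)) (v : Fin n) : ℕ :=
  (Finset.univ.filter (fun u : Fin n => u ≤ v ∧ isMin π u)).card
noncomputable def Mtot (π : Equiv.Perm (Fin n)) : ℕ :=
  (Finset.univ.filter (fun u : Fin n => isMin π u)).card
noncomputable def code (π : Equiv.Perm (Fin n)) (v : Fin n) : ℕ :=
  if asc π v then 2 * mcount π v - 1 else 2 * mcount π v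

lemma mcount_mono (π : Equiv.Perm (Fin n)) {a b : Fin n} (h : a ≤ b) :
    mcount π a ≤ mcount π b := by
  apply Finset.card_le_card
  intro u hu
  simp only [Finset.mem_filter] at hu ⊢
  exact ⟨hu.1, le_trans hu.2.1 h, hu.2.2⟩

lemma mcount_le_Mtot (π : Equiv.Perm (Fin n)) (v : Fin n) : mcount π v ≤ Mtot π := by
  apply Finset.card_le_card
  intro u hu
  simp only [Finset.mem_filter] at hu ⊢
  exact ⟨hu.1, hu.2.2⟩

lemma mcount_lt_Mtot (π : Equiv.Perm (Fin n)) (v : Fin n)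
    (h : ∃ u, v < u ∧ isMin π u) : mcount π v < Mtot π := by
  obtain ⟨u, hvu, hmin⟩ := h
  apply Finset.card_lt_card
  constructor
  · intro x hx; simp only [Finset.mem_filter] at hx ⊢; exact ⟨hx.1, hx.2.2⟩
  · intro hsub
    have := hsub (by simp [hmin] : u ∈ Finset.univ.filter (fun u => isMin π u))
    simp only [Finset.mem_filter] at this
    exact absurd this.2.1 (not_le.mpr hvu)

lemma mcount_lt_succ (π : Equiv.Perm (Fin n)) (a b : Fin n) (hb : (b : ℕ) = (a : ℕ) + 1)
    (hmin : isMin π b) : mcount π a < mcount π b := by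
  apply Finset.card_lt_card
  constructor
  · intro x hx; simp only [Finset.mem_filter] at hx ⊢
    refine ⟨hx.1, ?_, hx.2.2⟩
    have := hx.2.1; rw [Fin.le_def] at this ⊢; omega
  · intro hsub
    have hmem : b ∈ Finset.univ.filter (fun u : Fin n => u ≤ b ∧ isMin π u) := by
      simp [hmin]
    have := hsub hmem
    simp only [Finset.mem_filter] at this
    have := this.2.1; rw [Fin.le_def] at this; omega

lemma mcount_succ_eq (π : Equiv.Perm (Fin n)) (a b : Fin n) (hb : (b : ℕ) = (a : ℕ) + 1)
    (hnmin : ¬ isMin π b) : mcount π b = mcount π a := by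
  unfold mcount
  congr 1
  ext u
  simp only [Finset.mem_filter, Finset.mem_univ, true_and]
  constructor
  · rintro ⟨hub, hmin⟩
    refine ⟨?_, hmin⟩
    rw [Fin.le_def] at hub ⊢
    rcases Nat.lt_or_ge (u : ℕ) (b : ℕ) with h | h
    · omega
    · exfalso; have : u = b := Fin.ext (by omega); subst this; exact hnmin hmin
  · rintro ⟨hua, hmin⟩
    refine ⟨?_, hmin⟩
    rw [Fin.le_def] at hua ⊢; omega

lemma code_succ_le (π : Equiv.Perm (Fin n)) (a b : Fin n) (hb : (b : ℕ) = (a : ℕ) + 1) :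
    code π a ≤ code π b := by
  have hab : a ≤ b := by rw [Fin.le_def]; omega
  have hm := mcount_mono π hab
  unfold code
  by_cases hbasc : asc π b
  · by_cases haasc : asc π a
    · simp only [hbasc, haasc, if_true]; omega
    · have hminb : isMin π b := by
        rw [isMin_iff]
        refine ⟨hbasc, Or.inr ?_⟩
        have h0 : 0 < (b : ℕ) := by omega
        have : prv b = a := by apply Fin.ext; rw [prv_eq b h0]; simp; omega
        rw [this]; exact haasc
      have := mcount_lt_succ π a b hb hminb
      simp only [hbasc, haasc, if_true, if_false]; omega
  · have hminb : ¬ isMin π b := by rw [isMin_iff]; tauto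
    have heq := mcount_succ_eq π a b hb hminb
    by_cases haasc : asc π a <;> simp only [hbasc, haasc, if_true, if_false] <;> omega

lemma code_mono (π : Equiv.Perm (Fin n)) {a b : Fin n} (h : a ≤ b) :
    code π a ≤ code π b := by
  obtain ⟨bv, hbv⟩ := b
  rw [Fin.le_def] at h
  simp only [Fin.val_mk] at h
  induction bv with
  | zero =>
    have : a = ⟨0, hbv⟩ := Fin.ext (by simp; omega)
    rw [this]
  | succ m ih =>
    rcases Nat.lt_or_ge (a : ℕ) (m + 1) with hlt | hge
    · have hmn : m < n := by omega
      exact le_trans (ih hmn (by omega)) (code_succ_le π ⟨m, hmn⟩ ⟨m+1, hbv⟩ rfl)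
    · have : a = ⟨m + 1, hbv⟩ := Fin.ext (by simp; omega)
      rw [this]

lemma asc_mcount_pos (π : Equiv.Perm (Fin n)) :
    ∀ (k : ℕ) (hk : k < n), asc π ⟨k, hk⟩ → 0 < mcount π ⟨k, hk⟩ := by
  intro k
  induction k with
  | zero =>
    intro hk ha
    have hmin : isMin π ⟨0, hk⟩ := by rw [isMin_iff]; exact ⟨ha, Or.inl rfl⟩
    apply Finset.card_pos.mpr
    exact ⟨⟨0, hk⟩, by simp [hmin]⟩
  | succ m ih =>
    intro hk ha
    have hmn : m < n := by omega
    by_cases hm : asc π ⟨m, hmn⟩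
    · exact lt_of_lt_of_le (ih hmn hm) (mcount_mono π (by simp [Fin.le_def]))
    · have hmin : isMin π ⟨m + 1, hk⟩ := by
        rw [isMin_iff]
        refine ⟨ha, Or.inr ?_⟩
        have : prv (⟨m + 1, hk⟩ : Fin n) = ⟨m, hmn⟩ := by
          apply Fin.ext; rw [prv_eq _ (by simp : 0 < ((⟨m+1,hk⟩ : Fin n) : ℕ))]; simp
        rw [this]; exact hm
      apply Finset.card_pos.mpr
      exact ⟨⟨m + 1, hk⟩, by simp [hmin]⟩

lemma exists_min_gt (π : Equiv.Perm (Fin n)) :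
    ∀ (m : ℕ) (v : Fin n), n ≤ (v : ℕ) + m → ¬ asc π v → ∃ u, v < u ∧ isMin π u := by
  intro m
  induction m with
  | zero => intro v hle _; exact absurd v.isLt (by omega)
  | succ m ih =>
    intro v hle hna
    have hvn : (v : ℕ) + 1 < n := by
      by_contra h
      exact hna (asc_of_last π v h)
    set w : Fin n := ⟨(v : ℕ) + 1, hvn⟩ with hw
    by_cases hwa : asc π w
    · refine ⟨w, by rw [Fin.lt_def]; simp [hw], ?_⟩
      rw [isMin_iff]
      refine ⟨hwa, Or.inr ?_⟩
      have : prv w = v := by apply Fin.ext; rw [prv_eq w (by simp [hw])]; simp [hw]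
      rw [this]; exact hna
    · obtain ⟨u, hu, hmin⟩ := ih w (by simp [hw]; omega) hwa
      refine ⟨u, ?_, hmin⟩
      rw [Fin.lt_def] at hu ⊢
      simp [hw] at hu
      omega

lemma code_odd_iff (π : Equiv.Perm (Fin n)) (v : Fin n) :
    code π v % 2 = 1 ↔ asc π v := by
  unfold code
  by_cases ha : asc π v
  · simp only [ha, if_true, iff_true]
    have h2 : 0 < mcount π v := asc_mcount_pos π (v : ℕ) v.isLt (by rwa [Fin.eta])
    omega
  · simp only [ha, if_false, iff_false]
    omega


lemma code_lt (π : Equiv.Perm (Fin n)) (d : ℕ) (hM : Mtot π ≤ d + 1) (v : Fin n) :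
    code π v < 2 * d + 2 := by
  have h1 : mcount π v ≤ d + 1 := le_trans (mcount_le_Mtot π v) hM
  unfold code
  by_cases ha : asc π v
  · simp only [ha, if_true]; omega
  · simp only [ha, if_false]
    have := mcount_lt_Mtot π v (exists_min_gt π n v (by omega) ha)
    omega

lemma tm_lt_chain (π : Equiv.Perm (Fin n)) (a : Fin n) :
    ∀ (k : ℕ) (hk : (a : ℕ) + k < n),
      (∀ u : Fin n, a ≤ u → (u : ℕ) < (a : ℕ) + k → tm π u < tm π (nxt u)) →
      0 < k → tm π a < tm π ⟨(a : ℕ) + k, hk⟩ := by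
  intro k
  induction k with
  | zero => omega
  | succ m ih =>
    intro hk h _
    have hmn : (a : ℕ) + m < n := by omega
    have hstep := h ⟨(a : ℕ) + m, hmn⟩ (by simp [Fin.le_def]) (by simp)
    have hnx : nxt (⟨(a : ℕ) + m, hmn⟩ : Fin n) = ⟨(a : ℕ) + m + 1, hk⟩ := by
      rw [nxt_eq _ (by simp; omega : ((⟨(a : ℕ) + m, hmn⟩ : Fin n) : ℕ) + 1 < n)]
    rw [hnx] at hstep
    rcases Nat.eq_zero_or_pos m with hm | hm
    · subst hm
      have e1 : tm π a = tm π ⟨(a : ℕ) + 0, hmn⟩ :=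
        congrArg (tm π) (Fin.ext (by simp))
      rw [e1]; exact hstep
    · exact lt_trans (ih hmn (fun u hu hu2 => h u hu (by omega)) hm) hstep

lemma tm_gt_chain (π : Equiv.Perm (Fin n)) (a : Fin n) :
    ∀ (k : ℕ) (hk : (a : ℕ) + k < n),
      (∀ u : Fin n, a ≤ u → (u : ℕ) < (a : ℕ) + k → tm π (nxt u) < tm π u) →
      0 < k → tm π ⟨(a : ℕ) + k, hk⟩ < tm π a := by
  intro k
  induction k with
  | zero => omega
  | succ m ih =>
    intro hk h _
    have hmn : (a : ℕ) + m < n := by omega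
    have hstep := h ⟨(a : ℕ) + m, hmn⟩ (by simp [Fin.le_def]) (by simp)
    have hnx : nxt (⟨(a : ℕ) + m, hmn⟩ : Fin n) = ⟨(a : ℕ) + m + 1, hk⟩ := by
      rw [nxt_eq _ (by simp; omega : ((⟨(a : ℕ) + m, hmn⟩ : Fin n) : ℕ) + 1 < n)]
    rw [hnx] at hstep
    rcases Nat.eq_zero_or_pos m with hm | hm
    · subst hm
      have e1 : tm π a = tm π ⟨(a : ℕ) + 0, hmn⟩ :=
        congrArg (tm π) (Fin.ext (by simp))
      rw [e1]; exact hstep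
    · exact lt_trans hstep (ih hmn (fun u hu hu2 => h u hu (by omega)) hm)

lemma code_squeeze (π : Equiv.Perm (Fin n)) {a b u : Fin n} (hab : code π a = code π b)
    (h1 : a ≤ u) (h2 : u ≤ b) : code π u = code π a := by
  have := code_mono π h1
  have := code_mono π h2
  omega

lemma fiber_asc (π : Equiv.Perm (Fin n)) {a b : Fin n} (hab : a < b)
    (hcode : code π a = code π b) (hasc : asc π a) : tm π a < tm π b := by
  have hk : (a : ℕ) + ((b : ℕ) - (a : ℕ)) < n := by
    have := b.isLt; rw [Fin.lt_def] at hab; omega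
  have hb : b = ⟨(a : ℕ) + ((b : ℕ) - (a : ℕ)), hk⟩ := by
    apply Fin.ext; simp; rw [Fin.lt_def] at hab; omega
  rw [hb]
  apply tm_lt_chain π a _ hk _ (by rw [Fin.lt_def] at hab; omega)
  intro u hu hu2
  have hub : u ≤ b := by rw [Fin.le_def]; rw [Fin.lt_def] at hab; omega
  have hcu : code π u = code π a := code_squeeze π hcode hu hub
  have hau : asc π u := by
    rw [← code_odd_iff] at hasc ⊢
    omega
  apply asc_lt π u _ hau
  have := b.isLt; rw [Fin.lt_def] at hab; omega

lemma fiber_desc (π : Equiv.Perm (Fin n)) {a b : Fin n} (hab : a < b)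
    (hcode : code π a = code π b) (hasc : ¬ asc π a) : tm π b < tm π a := by
  have hk : (a : ℕ) + ((b : ℕ) - (a : ℕ)) < n := by
    have := b.isLt; rw [Fin.lt_def] at hab; omega
  have hb : b = ⟨(a : ℕ) + ((b : ℕ) - (a : ℕ)), hk⟩ := by
    apply Fin.ext; simp; rw [Fin.lt_def] at hab; omega
  rw [hb]
  apply tm_gt_chain π a _ hk _ (by rw [Fin.lt_def] at hab; omega)
  intro u hu hu2
  have hub : u ≤ b := by rw [Fin.le_def]; rw [Fin.lt_def] at hab; omega
  have hcu : code π u = code π a := code_squeeze π hcode hu hub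
  have hau : ¬ asc π u := by
    rw [← code_odd_iff] at hasc ⊢
    omega
  have hun : (u : ℕ) + 1 < n := by
    have := b.isLt; rw [Fin.lt_def] at hab; omega
  rcases lt_or_ge (tm π (nxt u)) (tm π u) with h | h
  · exact h
  · exfalso; exact hau h


lemma numKinks_eq (π : Equiv.Perm (Fin n)) :
    numKinks π
      = (Finset.univ.filter (fun v : Fin n => 0 < (tm π v : ℕ) ∧ isMin π v)).card := by
  unfold numKinks
  apply Finset.card_bij' (fun i _ => π i) (fun v _ => tm π v)
  · intro i hi
    simp only [Finset.mem_filter, Finset.mem_univ, true_and] at hi ⊢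
    obtain ⟨hpos, hP⟩ := hi
    have htm : tm π (π i) = i := π.symm_apply_apply i
    refine ⟨by rw [htm]; exact hpos, ?_, ?_⟩
    · intro u hu
      rw [htm]
      rw [Fin.lt_def]
      by_contra hle
      push_neg at hle
      have hne : (tm π u : ℕ) ≠ (i : ℕ) := by
        intro he
        have : tm π u = i := Fin.ext he
        have : u = π i := by
          have := congrArg π this
          unfold tm at this
          rwa [Equiv.apply_symm_apply] at this
        omega
      have hlt : (tm π u : ℕ) < (i : ℕ) := lt_of_le_of_ne hle hne
      have := (hP (tm π u) hlt).1
      unfold tm at this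
      rw [Equiv.apply_symm_apply] at this
      exact this hu
    · intro u hu
      rw [htm]
      rw [Fin.lt_def]
      by_contra hle
      push_neg at hle
      have hne : (tm π u : ℕ) ≠ (i : ℕ) := by
        intro he
        have : tm π u = i := Fin.ext he
        have : u = π i := by
          have := congrArg π this
          unfold tm at this
          rwa [Equiv.apply_symm_apply] at this
        omega
      have hlt : (tm π u : ℕ) < (i : ℕ) := lt_of_le_of_ne hle hne
      have := (hP (tm π u) hlt).2
      unfold tm at this
      rw [Equiv.apply_symm_apply] at this
      exact this hu
  · intro v hv
    simp only [Finset.mem_filter, Finset.mem_univ, true_and] at hv ⊢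
    obtain ⟨hpos, hmin⟩ := hv
    have hv' : π (tm π v) = v := π.apply_symm_apply v
    rw [hv']
    refine ⟨hpos, ?_⟩
    intro j hj
    constructor
    · intro he
      have := hmin.1 (π j) he
      unfold tm at this
      rw [Equiv.symm_apply_apply] at this
      rw [Fin.lt_def] at this
      unfold tm at hj
      omega
    · intro he
      have := hmin.2 (π j) he
      unfold tm at this
      rw [Equiv.symm_apply_apply] at this
      rw [Fin.lt_def] at this
      unfold tm at hj
      omega
  · intro i _; exact π.symm_apply_apply i
  · intro v _; exact π.apply_symm_apply v

lemma Mtot_eq (π : Equiv.Perm (Fin n)) (hn : 0 < n) (d : ℕ) (hd : numKinks π = d) :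
    Mtot π = d + 1 := by
  set v₀ : Fin n := π ⟨0, hn⟩ with hv₀
  have htm0 : tm π v₀ = ⟨0, hn⟩ := π.symm_apply_apply _
  have hminv₀ : isMin π v₀ := by
    constructor
    · intro u hu
      rw [htm0, Fin.lt_def]
      simp only [Fin.val_mk]
      rcases Nat.eq_zero_or_pos (tm π u : ℕ) with h | h
      · exfalso
        have : tm π u = ⟨0, hn⟩ := Fin.ext h
        rw [← htm0] at this
        have := tm_inj π this
        omega
      · exact h
    · intro u hu
      rw [htm0, Fin.lt_def]
      simp only [Fin.val_mk]
      rcases Nat.eq_zero_or_pos (tm π u : ℕ) with h | h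
      · exfalso
        have : tm π u = ⟨0, hn⟩ := Fin.ext h
        rw [← htm0] at this
        have := tm_inj π this
        omega
      · exact h
  have hset : Finset.univ.filter (fun u : Fin n => isMin π u)
      = insert v₀ (Finset.univ.filter (fun v : Fin n => 0 < (tm π v : ℕ) ∧ isMin π v)) := by
    ext u
    simp only [Finset.mem_filter, Finset.mem_univ, true_and, Finset.mem_insert]
    constructor
    · intro hmin
      rcases Nat.eq_zero_or_pos (tm π u : ℕ) with h | h
      · left
        have : tm π u = ⟨0, hn⟩ := Fin.ext h
        rw [← htm0] at this
        exact tm_inj π this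
      · exact Or.inr ⟨h, hmin⟩
    · rintro (rfl | ⟨_, hmin⟩)
      · exact hminv₀
      · exact hmin
  have hnotmem : v₀ ∉ Finset.univ.filter (fun v : Fin n => 0 < (tm π v : ℕ) ∧ isMin π v) := by
    simp [htm0]
  unfold Mtot
  rw [hset, Finset.card_insert_of_notMem hnotmem, ← numKinks_eq π, hd]

lemma uniq {α β : Type*} [LinearOrder α] [LinearOrder β] :
    ∀ (m : ℕ) (S : Finset α) (f g : α → β), S.card = m →
      (∀ a ∈ S, ∀ b ∈ S, a < b → f a < f b) →
      (∀ a ∈ S, ∀ b ∈ S, a < b → g a < g b) →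
      (∀ y, (∃ a ∈ S, f a = y) ↔ (∃ a ∈ S, g a = y)) → ∀ a ∈ S, f a = g a := by
  classical
  intro m
  induction m with
  | zero =>
    intro S f g hc _ _ _ a ha
    rw [Finset.card_eq_zero] at hc
    subst hc
    simp at ha
  | succ m ih =>
    intro S f g hc hf hg himgE a ha
    have himg : S.image f = S.image g := by
      ext y
      simp only [Finset.mem_image]
      exact himgE y
    have hne : S.Nonempty := ⟨a, ha⟩
    set M := S.max' hne with hM
    have hMS : M ∈ S := S.max'_mem hne
    have hfM : ∀ (f : α → β), (∀ a ∈ S, ∀ b ∈ S, a < b → f a < f b) →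
        f M = (S.image f).max' (hne.image f) := by
      intro f hf
      apply le_antisymm
      · exact Finset.le_max' _ _ (Finset.mem_image_of_mem f hMS)
      · apply Finset.max'_le
        intro y hy
        obtain ⟨b, hb, rfl⟩ := Finset.mem_image.mp hy
        rcases eq_or_lt_of_le (S.le_max' b hb) with h | h
        · rw [h]
        · exact le_of_lt (hf b hb M hMS h)
    have hmax : ∀ (s t : Finset β) (hs : s.Nonempty) (ht : t.Nonempty), s = t →
        s.max' hs = t.max' ht := by
      rintro s t hs ht rfl; rfl
    have hfgM : f M = g M := by
      rw [hfM f hf, hfM g hg]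
      exact hmax _ _ _ _ himg
    rcases eq_or_ne a M with rfl | haM
    · exact hfgM
    have haS' : a ∈ S.erase M := Finset.mem_erase.mpr ⟨haM, ha⟩
    have h1 : ∀ (f : α → β), (∀ a ∈ S, ∀ b ∈ S, a < b → f a < f b) →
        (S.erase M).image f = (S.image f).erase (f M) := by
      intro f hf
      ext y
      simp only [Finset.mem_image, Finset.mem_erase]
      constructor
      · rintro ⟨b, ⟨hbM, hbS⟩, rfl⟩
        have hblt : b < M := lt_of_le_of_ne (S.le_max' b hbS) hbM
        exact ⟨ne_of_lt (hf b hbS M hMS hblt), b, hbS, rfl⟩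
      · rintro ⟨hy, b, hbS, rfl⟩
        refine ⟨b, ⟨?_, hbS⟩, rfl⟩
        rintro rfl
        exact hy rfl
    have himg' : (S.erase M).image f = (S.erase M).image g := by
      rw [h1 f hf, h1 g hg, himg, hfgM]
    have hcard : (S.erase M).card = m := by
      rw [Finset.card_erase_of_mem hMS, hc]
      omega
    exact ih (S.erase M) f g hcard
      (fun x hx y hy => hf x (Finset.mem_of_mem_erase hx) y (Finset.mem_of_mem_erase hy))
      (fun x hx y hy => hg x (Finset.mem_of_mem_erase hx) y (Finset.mem_of_mem_erase hy))
      (fun y => by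
        rw [← Finset.mem_image, ← Finset.mem_image, himg'])
      a haS'

lemma mono_eq {f g : Fin n → ℕ} (hf : Monotone f) (hg : Monotone g)
    (h : Finset.univ.val.map f = Finset.univ.val.map g) : f = g := by
  rw [Fin.univ_val_map, Fin.univ_val_map] at h
  have hperm : (List.ofFn f).Perm (List.ofFn g) := Multiset.coe_eq_coe.mp h
  have := hperm.eq_of_sortedLE
    (List.sortedLE_ofFn_iff.mpr hf) (List.sortedLE_ofFn_iff.mpr hg)
  exact List.ofFn_injective this


lemma tm_eq_imp (π π' : Equiv.Perm (Fin n)) (h : ∀ v, tm π v = tm π' v) : π = π' := by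
  have hsymm : π.symm = π'.symm := Equiv.coe_fn_injective (funext h)
  have := congrArg Equiv.symm hsymm
  simpa using this

lemma F_le (n d : ℕ) (hn : 0 < n) : F n d ≤ (2 * d + 2) ^ n := by
  classical
  unfold F
  have hcard : ((Finset.univ : Finset (Fin n → Fin (2 * d + 2)))).card = (2 * d + 2) ^ n := by
    simp [Finset.card_univ]
  rw [← hcard]
  apply Finset.card_le_card_of_injOn
    (fun π => fun w : Fin n =>
      (⟨min (code π (π w)) (2 * d + 1), by omega⟩ : Fin (2 * d + 2)))
  · intro π _
    exact Finset.mem_univ _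
  · intro π hπ π' hπ' hE
    simp only [Finset.coe_filter, Finset.mem_univ, true_and, Set.mem_setOf_eq] at hπ hπ'
    have hMπ : Mtot π ≤ d + 1 := le_of_eq (Mtot_eq π hn d hπ)
    have hMπ' : Mtot π' ≤ d + 1 := le_of_eq (Mtot_eq π' hn d hπ')
    have hltπ : ∀ v, code π v < 2 * d + 2 := code_lt π d hMπ
    have hltπ' : ∀ v, code π' v < 2 * d + 2 := code_lt π' d hMπ'
    have hfun : ∀ w, code π (π w) = code π' (π' w) := by
      intro w
      have hw := congrFun hE w
      simp only at hw
      have h1 : min (code π (π w)) (2 * d + 1) = code π (π w) :=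
        min_eq_left (by have := hltπ (π w); omega)
      have h2 : min (code π' (π' w)) (2 * d + 1) = code π' (π' w) :=
        min_eq_left (by have := hltπ' (π' w); omega)
      have := congrArg Fin.val hw
      simp only [Fin.val_mk] at this
      rw [h1, h2] at this
      exact this
    have hmsetgen : ∀ (ρ : Equiv.Perm (Fin n)),
        Finset.univ.val.map (code ρ) = Finset.univ.val.map (fun w => code ρ (ρ w)) := by
      intro ρ
      conv_lhs => rw [← Multiset.map_univ_val_equiv ρ]
      rw [Multiset.map_map]
      rfl
    have hcode : code π = code π' := by
      apply mono_eq
      · intro a b hab; exact code_mono π hab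
      · intro a b hab; exact code_mono π' hab
      · rw [hmsetgen π, hmsetgen π']
        congr 1
        funext w
        exact hfun w
    have htm : ∀ v, tm π v = tm π' v := by
      intro v
      set j := code π v with hj
      set S : Finset (Fin n) := Finset.univ.filter (fun u => code π u = j) with hS
      have hvS : v ∈ S := by simp [hS, hj]
      set T : Finset (Fin n) := Finset.univ.filter (fun w => code π (π w) = j) with hT
      have himgπ : S.image (tm π) = T := by
        ext w
        simp only [Finset.mem_image, Finset.mem_filter, Finset.mem_univ, true_and, hS, hT]
        constructor
        · rintro ⟨u, hu, rfl⟩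
          have : π (tm π u) = u := π.apply_symm_apply u
          rw [this]
          exact hu
        · intro hw
          refine ⟨π w, hw, π.symm_apply_apply w⟩
      have himgπ' : S.image (tm π') = T := by
        ext w
        simp only [Finset.mem_image, Finset.mem_filter, Finset.mem_univ, true_and, hS, hT]
        constructor
        · rintro ⟨u, hu, rfl⟩
          have h1 : π' (tm π' u) = u := π'.apply_symm_apply u
          rw [hfun (tm π' u), h1, ← hcode]
          exact hu
        · intro hw
          refine ⟨π' w, ?_, π'.symm_apply_apply w⟩
          rw [hcode, ← hfun w]
          exact hw
      by_cases hasc : asc π v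
      · have hj1 : j % 2 = 1 := by rw [hj]; exact (code_odd_iff π v).mpr hasc
        have hfa : ∀ a ∈ S, ∀ b ∈ S, a < b → tm π a < tm π b := by
          intro a ha b hb hab
          simp only [hS, Finset.mem_filter, Finset.mem_univ, true_and] at ha hb
          exact fiber_asc π hab (ha.trans hb.symm) ((code_odd_iff π a).mp (by omega))
        have hfa' : ∀ a ∈ S, ∀ b ∈ S, a < b → tm π' a < tm π' b := by
          intro a ha b hb hab
          simp only [hS, Finset.mem_filter, Finset.mem_univ, true_and] at ha hb
          have ha' : code π' a = j := by rw [← hcode]; exact ha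
          have hb' : code π' b = j := by rw [← hcode]; exact hb
          exact fiber_asc π' hab (ha'.trans hb'.symm) ((code_odd_iff π' a).mp (by omega))
        exact uniq S.card S (tm π) (tm π') rfl hfa hfa'
          (fun y => by rw [← Finset.mem_image, ← Finset.mem_image, himgπ, himgπ']) v hvS
      · have hj1 : j % 2 ≠ 1 := by
          rw [hj]; intro hco; exact hasc ((code_odd_iff π v).mp hco)
        have hfa : ∀ a ∈ S, ∀ b ∈ S, a < b →
            (OrderDual.toDual (tm π a)) < (OrderDual.toDual (tm π b)) := by
          intro a ha b hb hab
          simp only [hS, Finset.mem_filter, Finset.mem_univ, true_and] at ha hb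
          have hna : ¬ asc π a := fun hc => by
            have := (code_odd_iff π a).mpr hc; omega
          exact fiber_desc π hab (ha.trans hb.symm) hna
        have hfa' : ∀ a ∈ S, ∀ b ∈ S, a < b →
            (OrderDual.toDual (tm π' a)) < (OrderDual.toDual (tm π' b)) := by
          intro a ha b hb hab
          simp only [hS, Finset.mem_filter, Finset.mem_univ, true_and] at ha hb
          have ha' : code π' a = j := by rw [← hcode]; exact ha
          have hb' : code π' b = j := by rw [← hcode]; exact hb
          have hna : ¬ asc π' a := fun hc => by
            have := (code_odd_iff π' a).mpr hc; omega
          exact fiber_desc π' hab (ha'.trans hb'.symm) hna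
        have himgE : ∀ y, (∃ a ∈ S, tm π a = y) ↔ (∃ a ∈ S, tm π' a = y) := by
          intro y
          rw [← Finset.mem_image, ← Finset.mem_image, himgπ, himgπ']
        have := uniq S.card S (fun a => OrderDual.toDual (tm π a))
          (fun a => OrderDual.toDual (tm π' a)) rfl hfa hfa'
          (fun y => himgE (OrderDual.ofDual y)) v hvS
        exact OrderDual.toDual.injective this
    exact tm_eq_imp π π' htm

end FKink


theorem F_upper_bound (d : ℕ) :
    ∃ C : ℝ, 0 < C ∧ ∀ n : ℕ, 2 ≤ n → (F n d : ℝ) ≤ C * (2 * ((d : ℝ) + 1)) ^ n := by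
  refine ⟨1, one_pos, fun n hn => ?_⟩
  rw [one_mul]
  have h1 : F n d ≤ (2 * d + 2) ^ n := FKink.F_le n d (by omega)
  have h2 : (F n d : ℝ) ≤ (((2 * d + 2) ^ n : ℕ) : ℝ) := Nat.cast_le.mpr h1
  refine le_trans h2 (le_of_eq ?_)
  push_cast
  ring
end
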